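/- arXiv:1210.2284 — 6 statements merged into one kernel-verified Lean document; each statement's English description precedes it below -/
import Mathlib

section
/- Suppose F : [a,∞) → ℝ with a > 0, and F(x)/x is boundedly decreasing with ν̄(F(x)/x; e) ≤ C. Then for all y ≥ a, F(y) ≥ -M·y·(1 + log y - log a), where M = C + max(0, -F(a))/a. -/
lemma chain_bound (a C : ℝ) (ha : 0 < a) (F : ℝ → ℝ)
    (h : ∀ x y : ℝ, a ≤ x → x ≤ y → y ≤ Real.exp 1 * x →
        F y / y - F x / x ≥ -C) (hC : 0 ≤ C) :
    ∀ n : ℕ, ∀ y : ℝ, a ≤ y → y ≤ a * Real.exp n → F y / y ≥ F a / a - n * C := by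
  intro n
  induction n with
  | zero =>
    intro y hay hle
    simp only [Nat.cast_zero, Real.exp_zero, mul_one] at hle ⊢
    have : y = a := le_antisymm hle hay
    subst this; simp
  | succ n ih =>
    intro y hay hle
    have e1 : (1:ℝ) ≤ Real.exp 1 := by
      have := Real.add_one_le_exp (1:ℝ); linarith
    have e0 : (0:ℝ) < Real.exp 1 := Real.exp_pos 1
    set x := max a (y / Real.exp 1) with hx
    have hx1 : a ≤ x := le_max_left _ _
    have hxy : x ≤ y := by
      apply max_le hay
      calc y / Real.exp 1 ≤ y / 1 := by
            apply div_le_div_of_nonneg_left (le_trans ha.le hay) one_pos e1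
        _ = y := div_one y
    have hyex : y ≤ Real.exp 1 * x := by
      have : Real.exp 1 * (y / Real.exp 1) ≤ Real.exp 1 * x :=
        mul_le_mul_of_nonneg_left (le_max_right _ _) e0.le
      rwa [mul_div_cancel₀ _ (ne_of_gt e0)] at this
    have hxb : x ≤ a * Real.exp n := by
      apply max_le
      · nlinarith [Real.exp_pos (n:ℝ), Real.add_one_le_exp (n:ℝ), (Nat.cast_nonneg n : (0:ℝ) ≤ n)]
      · rw [div_le_iff₀ e0]
        calc y ≤ a * Real.exp ((n:ℕ)+1 : ℕ) := by exact_mod_cast hle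
          _ = a * Real.exp n * Real.exp 1 := by
              push_cast; rw [Real.exp_add]; ring
    have h1 := ih x hx1 hxb
    have h2 := h x y hx1 hxy hyex
    push_cast
    linarith

theorem lower_bound_of_boundedly_decreasing_quotient (a C : ℝ) (ha : 0 < a)
    (F : ℝ → ℝ)
    (h : ∀ x y : ℝ, a ≤ x → x ≤ y → y ≤ Real.exp 1 * x →
        F y / y - F x / x ≥ -C) :
    ∀ y : ℝ, a ≤ y →
      F y ≥ -(C + max 0 (-F a) / a) * y * (1 + Real.log y - Real.log a) := by
  intro y hay
  have hC : 0 ≤ C := by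
    have := h a a le_rfl le_rfl (by nlinarith [Real.add_one_le_exp (1:ℝ)])
    linarith
  have hy0 : 0 < y := lt_of_lt_of_le ha hay
  set m : ℝ := max 0 (-F a) / a with hm
  have hm0 : 0 ≤ m := div_nonneg (le_max_left _ _) ha.le
  have hga : F a / a ≥ -m := by
    rw [hm, ge_iff_le, ← neg_div]
    gcongr
    exact neg_le.mpr (le_max_right _ _)
  have hL : Real.log y - Real.log a = Real.log (y / a) := (Real.log_div (ne_of_gt hy0) (ne_of_gt ha)).symm
  have hL0 : 0 ≤ Real.log (y / a) := Real.log_nonneg ((one_le_div ha).mpr hay)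
  set n : ℕ := ⌈Real.log (y / a)⌉₊ with hn
  have hle : y ≤ a * Real.exp n := by
    have h1 : Real.log (y / a) ≤ (n : ℝ) := Nat.le_ceil _
    have h2 : y / a ≤ Real.exp n := by
      calc y / a = Real.exp (Real.log (y / a)) := (Real.exp_log (by positivity)).symm
        _ ≤ Real.exp n := Real.exp_le_exp.mpr h1
    calc y = a * (y / a) := by field_simp
      _ ≤ a * Real.exp n := mul_le_mul_of_nonneg_left h2 ha.le
  have hnle : (n : ℝ) ≤ Real.log (y / a) + 1 :=
    le_of_lt (Nat.ceil_lt_add_one hL0)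
  have key := chain_bound a C ha F h hC n y hay hle
  have hgoal : F y / y ≥ -(C + m) * (1 + Real.log (y / a)) := by
    nlinarith
  have heq : -(C + m) * y * (1 + Real.log y - Real.log a)
      = -(C + m) * (1 + Real.log (y / a)) * y := by rw [← hL]; ring
  rw [heq]
  have := mul_le_mul_of_nonneg_right hgoal hy0.le
  rwa [div_mul_cancel₀ _ (ne_of_gt hy0)] at this
end

section
/- Let ℓ : [a,∞) → (0,∞) be positive, nondecreasing, differentiable, with ℓ'/ℓ nonincreasing. If q : [a,∞) → ℝ is slowly decreasing and there is C > 0 with |q(x)| ≤ C·ℓ(x)²/(x·ℓ'(x)) for all x ≥ a, then q/ℓ is slowly decreasing on [a,∞). -/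
open Set

/-- `f` is slowly decreasing on `[a,∞)`:
`lim_{λ→1⁺} liminf_{x→∞} inf_{x ≤ y ≤ λx} (f(y) - f(x)) = 0`, expressed in ε-λ-X form. -/
def SlowlyDecreasingOn (f : ℝ → ℝ) (a : ℝ) : Prop :=
  ∀ ε : ℝ, 0 < ε → ∃ lam : ℝ, 1 < lam ∧ ∃ X : ℝ, a ≤ X ∧
    ∀ x y : ℝ, X ≤ x → x ≤ y → y ≤ lam * x → f y - f x ≥ -ε

/-- MVT-style bound: since `ℓ'/ℓ` is nonincreasing,
`log ℓ(y) - log ℓ(x) ≤ (y-x) ℓ'(x)/ℓ(x)`. -/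
lemma log_mvt_bound (a : ℝ) (ℓ ℓ' : ℝ → ℝ)
    (hpos : ∀ x, a ≤ x → 0 < ℓ x)
    (hderiv : ∀ x, a ≤ x → HasDerivAt ℓ (ℓ' x) x)
    (hanti : AntitoneOn (fun x => ℓ' x / ℓ x) (Ici a))
    {x y : ℝ} (hax : a ≤ x) (hxy : x ≤ y) :
    Real.log (ℓ y) - Real.log (ℓ x) ≤ (y - x) * (ℓ' x / ℓ x) := by
  rcases eq_or_lt_of_le hxy with rfl | hlt
  · simp
  have hlogd : ∀ t ∈ Icc x y, HasDerivAt (fun s => Real.log (ℓ s)) (ℓ' t / ℓ t) t := by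
    intro t ht
    have hat : a ≤ t := le_trans hax ht.1
    exact (hderiv t hat).log (hpos t hat).ne'
  obtain ⟨c, hc, hceq⟩ := exists_hasDerivAt_eq_slope (fun s => Real.log (ℓ s))
    (fun s => ℓ' s / ℓ s) hlt
    (fun t ht => (hlogd t ht).continuousAt.continuousWithinAt)
    (fun t ht => hlogd t (Ioo_subset_Icc_self ht))
  have hcx : a ≤ c := le_trans hax hc.1.le
  have hle : ℓ' c / ℓ c ≤ ℓ' x / ℓ x := hanti hax hcx hc.1.le
  rw [hceq] at hle
  rw [div_le_iff₀ (by linarith : (0:ℝ) < y - x)] at hle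
  linarith [hle]

theorem slowlyDecreasing_div_ell (a C : ℝ) (ha : 0 < a) (hC : 0 < C)
    (ℓ ℓ' q : ℝ → ℝ)
    (hpos : ∀ x, a ≤ x → 0 < ℓ x)
    (hmono : MonotoneOn ℓ (Ici a))
    (hderiv : ∀ x, a ≤ x → HasDerivAt ℓ (ℓ' x) x)
    (hanti : AntitoneOn (fun x => ℓ' x / ℓ x) (Ici a))
    (hq : ∀ x, a ≤ x → |q x| ≤ C * (ℓ x) ^ 2 / (x * ℓ' x))
    (hslow : SlowlyDecreasingOn q a) :
    SlowlyDecreasingOn (fun x => q x / ℓ x) a := by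
  intro ε hε
  have hℓa : 0 < ℓ a := hpos a le_rfl
  have hδ : 0 < ε * ℓ a / 2 := by positivity
  obtain ⟨lam₁, hlam₁, X₁, hX₁a, hX₁⟩ := hslow (ε * ℓ a / 2) hδ
  have hlam' : (1:ℝ) < 1 + ε / (2 * C) := by
    have : 0 < ε / (2 * C) := by positivity
    linarith
  refine ⟨min lam₁ (1 + ε / (2 * C)), lt_min hlam₁ hlam', X₁, hX₁a, ?_⟩
  intro x y hXx hxy hylam
  have hax : a ≤ x := le_trans hX₁a hXx
  have hay : a ≤ y := le_trans hax hxy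
  have hx0 : 0 < x := lt_of_lt_of_le ha hax
  have hℓx : 0 < ℓ x := hpos x hax
  have hℓy : 0 < ℓ y := hpos y hay
  have hℓay : ℓ a ≤ ℓ y := hmono (le_refl a) hay hay
  have hℓxy : ℓ x ≤ ℓ y := hmono hax hay hxy
  -- y ≤ lam₁ * x and y ≤ (1 + ε/(2C)) * x
  have hy1 : y ≤ lam₁ * x :=
    le_trans hylam (mul_le_mul_of_nonneg_right (min_le_left _ _) hx0.le)
  have hy2 : y ≤ (1 + ε / (2 * C)) * x :=
    le_trans hylam (mul_le_mul_of_nonneg_right (min_le_right _ _) hx0.le)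
  -- Term 1
  have hq1 : q y - q x ≥ -(ε * ℓ a / 2) := hX₁ x y hXx hxy hy1
  have h1 : (q y - q x) / ℓ y ≥ -(ε / 2) := by
    rw [ge_iff_le, le_div_iff₀ hℓy]
    nlinarith
  -- Term 2
  have h2 : q x * (1 / ℓ y - 1 / ℓ x) ≥ -(ε / 2) := by
    have hqx := hq x hax
    have hℓ'x : 0 ≤ ℓ' x := by
      by_contra h
      push_neg at h
      have : C * (ℓ x) ^ 2 / (x * ℓ' x) < 0 :=
        div_neg_of_pos_of_neg (by positivity) (mul_neg_of_pos_of_neg hx0 h)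
      linarith [abs_nonneg (q x)]
    rcases eq_or_lt_of_le hℓ'x with h0 | hℓ'pos
    · -- ℓ' x = 0 forces q x = 0
      have : |q x| ≤ 0 := by rw [← h0] at hqx; simpa using hqx
      have hqx0 : q x = 0 := abs_nonpos_iff.mp this
      rw [hqx0]
      simp
      positivity
    · -- main case
      set t := (y - x) * (ℓ' x / ℓ x) with ht
      have ht0 : 0 ≤ t := mul_nonneg (by linarith) (by positivity)
      have hlog := log_mvt_bound a ℓ ℓ' hpos hderiv hanti hax hxy
      have hexp : ℓ y ≤ ℓ x * Real.exp t := by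
        have h1' : Real.log (ℓ y) ≤ Real.log (ℓ x) + t := by linarith
        calc ℓ y = Real.exp (Real.log (ℓ y)) := (Real.exp_log hℓy).symm
          _ ≤ Real.exp (Real.log (ℓ x) + t) := Real.exp_le_exp.mpr h1'
          _ = ℓ x * Real.exp t := by rw [Real.exp_add, Real.exp_log hℓx]
      have hinv : Real.exp (-t) / ℓ x ≤ 1 / ℓ y := by
        rw [div_le_div_iff₀ hℓx hℓy]
        have := Real.exp_pos (-t)
        calc Real.exp (-t) * ℓ y ≤ Real.exp (-t) * (ℓ x * Real.exp t) :=
              mul_le_mul_of_nonneg_left hexp this.le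
          _ = ℓ x * (Real.exp (-t) * Real.exp t) := by ring
          _ = 1 * ℓ x := by rw [← Real.exp_add]; simp [mul_comm]
      have hexpge : 1 - t ≤ Real.exp (-t) := by linarith [Real.add_one_le_exp (-t)]
      have hfrac : 1 / ℓ x - 1 / ℓ y ≤ t / ℓ x := by
        have h3 : (1 - t) / ℓ x ≤ Real.exp (-t) / ℓ x := by gcongr
        have : (1 - t) / ℓ x ≤ 1 / ℓ y := le_trans h3 hinv
        have heq : 1 / ℓ x - t / ℓ x = (1 - t) / ℓ x := by ring
        linarith
      have hs0 : 0 ≤ 1 / ℓ x - 1 / ℓ y := by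
        have : 1 / ℓ y ≤ 1 / ℓ x := one_div_le_one_div_of_le hℓx hℓxy
        linarith
      -- |q x| * (1/ℓx - 1/ℓy) ≤ C*(y-x)/x ≤ ε/2
      have hkey : |q x| * (1 / ℓ x - 1 / ℓ y) ≤ C * (y - x) / x := by
        calc |q x| * (1 / ℓ x - 1 / ℓ y)
            ≤ (C * (ℓ x) ^ 2 / (x * ℓ' x)) * (t / ℓ x) :=
              mul_le_mul hqx hfrac hs0 (le_trans (abs_nonneg _) hqx)
          _ = C * (y - x) / x := by
              rw [ht]; field_simp
      have hfin : C * (y - x) / x ≤ ε / 2 := by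
        have hyx : y - x ≤ ε / (2 * C) * x := by
          have hexpand : (1 + ε / (2 * C)) * x = x + ε / (2 * C) * x := by ring
          linarith [hy2, hexpand.symm ▸ hy2]
        rw [div_le_iff₀ hx0]
        calc C * (y - x) ≤ C * (ε / (2 * C) * x) := mul_le_mul_of_nonneg_left hyx hC.le
          _ = ε / 2 * x := by field_simp
      have habs : |q x| * (1 / ℓ x - 1 / ℓ y) ≤ ε / 2 := le_trans hkey hfin
      have : q x * (1 / ℓ x - 1 / ℓ y) ≤ |q x| * (1 / ℓ x - 1 / ℓ y) :=
        mul_le_mul_of_nonneg_right (le_abs_self _) hs0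
      nlinarith
  -- combine
  have heq : q y / ℓ y - q x / ℓ x = (q y - q x) / ℓ y + q x * (1 / ℓ y - 1 / ℓ x) := by
    field_simp
    ring
  show q y / ℓ y - q x / ℓ x ≥ -ε
  rw [heq]
  linarith
end

section
/- Let ℓ : [a,∞) → (0,∞) be positive, nondecreasing, differentiable, with ℓ'/ℓ nonincreasing. If q : [a,∞) → ℝ is boundedly decreasing (ν̄(q;λ) < ∞ for all λ > 1) and |q(x)| ≤ C·ℓ(x)²/(x·ℓ'(x)) for all x ≥ a, then q/ℓ is boundedly decreasing on [a,∞); in fact ν̄(q/ℓ; λ) ≤ ν̄(q;λ)/ℓ(a) + C(λ-1) for λ > 1. -/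
set_option maxHeartbeats 1000000

open Set

/-- The extended-real quantity ν̄(f;λ) = -inf{f(y)-f(x) : a ≤ x ≤ y ≤ λx}. -/
noncomputable def nubar (a : ℝ) (f : ℝ → ℝ) (lam : ℝ) : EReal :=
  - sInf ((fun p : ℝ × ℝ => ((f p.2 - f p.1 : ℝ) : EReal)) ''
      {p : ℝ × ℝ | a ≤ p.1 ∧ p.1 ≤ p.2 ∧ p.2 ≤ lam * p.1})

/-- The derivative of a function monotone on `Ici a` is nonnegative there. -/
lemma aux_deriv_nonneg {a : ℝ} {ℓ ℓ' : ℝ → ℝ} (hmono : MonotoneOn ℓ (Ici a))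
    (hderiv : ∀ x, a ≤ x → HasDerivAt ℓ (ℓ' x) x) {x : ℝ} (hx : a ≤ x) : 0 ≤ ℓ' x := by
  have h := ((hderiv x hx).hasDerivWithinAt (s := Ioi x))
  rw [hasDerivWithinAt_iff_tendsto_slope] at h
  have hset : Ioi x \ {x} = Ioi x := by
    apply diff_singleton_eq_self; simp
  rw [hset] at h
  refine ge_of_tendsto h ?_
  filter_upwards [self_mem_nhdsWithin] with t ht
  have hxt : x < t := ht
  have hle : ℓ x ≤ ℓ t := hmono (mem_Ici.2 hx) (mem_Ici.2 (hx.trans hxt.le)) hxt.le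
  rw [slope_def_field]
  exact div_nonneg (by linarith) (by linarith)

/-- Concavity-type estimate for `log ∘ ℓ` when `ℓ'/ℓ` is antitone. -/
lemma aux_log_concave {a : ℝ} {ℓ ℓ' : ℝ → ℝ} (hpos : ∀ x, a ≤ x → 0 < ℓ x)
    (hderiv : ∀ x, a ≤ x → HasDerivAt ℓ (ℓ' x) x)
    (hanti : AntitoneOn (fun x => ℓ' x / ℓ x) (Ici a))
    {x y : ℝ} (hax : a ≤ x) (hxy : x ≤ y) :
    Real.log (ℓ y) - Real.log (ℓ x) ≤ (y - x) * (ℓ' x / ℓ x) := by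
  set c := ℓ' x / ℓ x with hc
  have key : AntitoneOn (fun t => Real.log (ℓ t) - t * c) (Icc x y) := by
    apply antitoneOn_of_deriv_nonpos (convex_Icc x y)
    · intro t ht
      have hat : a ≤ t := hax.trans ht.1
      exact (((hderiv t hat).log (hpos t hat).ne').sub
        (hasDerivAt_mul_const c)).continuousAt.continuousWithinAt
    · intro t ht
      rw [interior_Icc] at ht
      have hat : a ≤ t := hax.trans ht.1.le
      exact (((hderiv t hat).log (hpos t hat).ne').sub
        (hasDerivAt_mul_const c)).differentiableAt.differentiableWithinAt
    · intro t ht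
      rw [interior_Icc] at ht
      have hat : a ≤ t := hax.trans ht.1.le
      have hd : HasDerivAt (fun t => Real.log (ℓ t) - t * c) (ℓ' t / ℓ t - c) t :=
        ((hderiv t hat).log (hpos t hat).ne').sub (hasDerivAt_mul_const c)
      rw [hd.deriv]
      have := hanti (mem_Ici.2 hax) (mem_Ici.2 hat) ht.1.le
      simp only at this
      linarith
  have h := key (left_mem_Icc.2 hxy) (right_mem_Icc.2 hxy) hxy
  simp only at h
  have hℓx := hpos x hax
  rw [hc]
  nlinarith [h]

theorem boundedlyDecreasing_div_ell (a C : ℝ) (ha : 0 < a) (hC : 0 < C)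
    (ℓ ℓ' q : ℝ → ℝ)
    (hpos : ∀ x, a ≤ x → 0 < ℓ x)
    (hmono : MonotoneOn ℓ (Ici a))
    (hderiv : ∀ x, a ≤ x → HasDerivAt ℓ (ℓ' x) x)
    (hanti : AntitoneOn (fun x => ℓ' x / ℓ x) (Ici a))
    (hq : ∀ x, a ≤ x → |q x| ≤ C * (ℓ x) ^ 2 / (x * ℓ' x))
    (hbdd : ∀ lam : ℝ, 1 < lam → nubar a q lam < ⊤) :
    (∀ lam : ℝ, 1 < lam → nubar a (fun x => q x / ℓ x) lam < ⊤) ∧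
    (∀ lam : ℝ, 1 < lam →
      nubar a (fun x => q x / ℓ x) lam ≤
        nubar a q lam * (((ℓ a)⁻¹ : ℝ) : EReal) + ((C * (lam - 1) : ℝ) : EReal)) := by
  have hLa : 0 < ℓ a := hpos a le_rfl
  -- nubar is always nonneg (when (a,a) is in the index set)
  have hnn : ∀ (f : ℝ → ℝ) (lam : ℝ), 1 < lam → 0 ≤ nubar a f lam := by
    intro f lam hlam
    have hmem : (a, a) ∈ {p : ℝ × ℝ | a ≤ p.1 ∧ p.1 ≤ p.2 ∧ p.2 ≤ lam * p.1} := by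
      refine ⟨le_rfl, le_rfl, ?_⟩
      nlinarith
    have h0 : ((f a - f a : ℝ) : EReal) ∈
        ((fun p : ℝ × ℝ => ((f p.2 - f p.1 : ℝ) : EReal)) ''
          {p : ℝ × ℝ | a ≤ p.1 ∧ p.1 ≤ p.2 ∧ p.2 ≤ lam * p.1}) :=
      mem_image_of_mem _ hmem
    have hle := sInf_le h0
    have : sInf ((fun p : ℝ × ℝ => ((f p.2 - f p.1 : ℝ) : EReal)) ''
        {p : ℝ × ℝ | a ≤ p.1 ∧ p.1 ≤ p.2 ∧ p.2 ≤ lam * p.1}) ≤ 0 := by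
      simpa using hle
    rw [nubar]
    rw [← neg_zero]
    exact EReal.neg_le_neg_iff.2 this
  have key : ∀ lam : ℝ, 1 < lam →
      nubar a (fun x => q x / ℓ x) lam ≤
        nubar a q lam * (((ℓ a)⁻¹ : ℝ) : EReal) + ((C * (lam - 1) : ℝ) : EReal) := by
    intro lam hlam
    have hν_top : nubar a q lam < ⊤ := hbdd lam hlam
    have hν_nn : 0 ≤ nubar a q lam := hnn q lam hlam
    have hν_bot : nubar a q lam ≠ ⊥ :=
      (lt_of_lt_of_le (by simp : (⊥ : EReal) < 0) hν_nn).ne'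
    set ν : ℝ := (nubar a q lam).toReal with hνdef
    have hν_eq : ((ν : ℝ) : EReal) = nubar a q lam := EReal.coe_toReal hν_top.ne hν_bot
    have hν0 : (0 : ℝ) ≤ ν := by
      have := hν_nn
      rw [← hν_eq] at this
      exact_mod_cast this
    -- the lower bound on increments of q
    have hq_lb : ∀ p : ℝ × ℝ, a ≤ p.1 → p.1 ≤ p.2 → p.2 ≤ lam * p.1 →
        -ν ≤ q p.2 - q p.1 := by
      intro p h1 h2 h3
      have hmem : ((q p.2 - q p.1 : ℝ) : EReal) ∈
          ((fun p : ℝ × ℝ => ((q p.2 - q p.1 : ℝ) : EReal)) ''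
            {p : ℝ × ℝ | a ≤ p.1 ∧ p.1 ≤ p.2 ∧ p.2 ≤ lam * p.1}) :=
        mem_image_of_mem _ ⟨h1, h2, h3⟩
      have hle := sInf_le hmem
      have hinf : sInf ((fun p : ℝ × ℝ => ((q p.2 - q p.1 : ℝ) : EReal)) ''
          {p : ℝ × ℝ | a ≤ p.1 ∧ p.1 ≤ p.2 ∧ p.2 ≤ lam * p.1}) = ((-ν : ℝ) : EReal) := by
        have : nubar a q lam = -(sInf ((fun p : ℝ × ℝ => ((q p.2 - q p.1 : ℝ) : EReal)) ''
            {p : ℝ × ℝ | a ≤ p.1 ∧ p.1 ≤ p.2 ∧ p.2 ≤ lam * p.1})) := rfl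
        rw [← hν_eq] at this
        have h2 : sInf ((fun p : ℝ × ℝ => ((q p.2 - q p.1 : ℝ) : EReal)) ''
            {p : ℝ × ℝ | a ≤ p.1 ∧ p.1 ≤ p.2 ∧ p.2 ≤ lam * p.1}) = -((ν : ℝ) : EReal) := by
          rw [this]; rw [neg_neg]
        rw [h2, ← EReal.coe_neg]
      rw [hinf] at hle
      exact_mod_cast hle
    -- pointwise inequality
    have hpt : ∀ p : ℝ × ℝ, a ≤ p.1 → p.1 ≤ p.2 → p.2 ≤ lam * p.1 →
        -(ν * (ℓ a)⁻¹ + C * (lam - 1)) ≤ q p.2 / ℓ p.2 - q p.1 / ℓ p.1 := by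
      rintro ⟨x, y⟩ hax hxy hylam
      simp only at hax hxy hylam ⊢
      have hay : a ≤ y := hax.trans hxy
      have hLx : 0 < ℓ x := hpos x hax
      have hLy : 0 < ℓ y := hpos y hay
      have hLay : ℓ a ≤ ℓ y := hmono (mem_Ici.2 le_rfl) (mem_Ici.2 hay) hay
      have hLxy : ℓ x ≤ ℓ y := hmono (mem_Ici.2 hax) (mem_Ici.2 hay) hxy
      have hq1 : -ν ≤ q y - q x := hq_lb (x, y) hax hxy hylam
      have hx0 : 0 < x := lt_of_lt_of_le ha hax
      have hℓ'x : 0 ≤ ℓ' x := aux_deriv_nonneg hmono hderiv hax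
      -- first term
      have key1 : -(ν * (ℓ a)⁻¹) ≤ (q y - q x) / ℓ y := by
        have h1 : ν / ℓ y ≤ ν / ℓ a := by
          apply div_le_div_of_nonneg_left hν0 hLa hLay
        have h2 : (-ν) / ℓ y ≤ (q y - q x) / ℓ y := by
          apply div_le_div_of_nonneg_right hq1 hLy.le |>.trans_eq rfl
        calc -(ν * (ℓ a)⁻¹) = -(ν / ℓ a) := by rw [div_eq_mul_inv]
          _ ≤ -(ν / ℓ y) := by linarith
          _ = (-ν) / ℓ y := by rw [neg_div]
          _ ≤ (q y - q x) / ℓ y := h2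
      -- second term
      have key2 : -(C * (lam - 1)) ≤ q x * (1 / ℓ y - 1 / ℓ x) := by
        rcases eq_or_lt_of_le hℓ'x with h0 | hℓ'pos
        · -- ℓ' x = 0 forces q x = 0
          have hqx : q x = 0 := by
            have := hq x hax
            rw [← h0] at this
            simp at this
            have : |q x| ≤ 0 := by simpa using this
            exact abs_eq_zero.1 (le_antisymm this (abs_nonneg _))
          rw [hqx]
          simp only [zero_mul, neg_nonpos]
          nlinarith
        · -- main case
          have habs : |q x| ≤ C * (ℓ x) ^ 2 / (x * ℓ' x) := hq x hax
          have hxl : 0 < x * ℓ' x := mul_pos hx0 hℓ'pos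
          -- key log estimate
          have hlog := aux_log_concave hpos hderiv hanti hax hxy
          have hlog2 : Real.log (ℓ x / ℓ y) ≤ ℓ x / ℓ y - 1 :=
            Real.log_le_sub_one_of_pos (div_pos hLx hLy)
          have hlogdiv : Real.log (ℓ x / ℓ y) = Real.log (ℓ x) - Real.log (ℓ y) :=
            Real.log_div hLx.ne' hLy.ne'
          have h3 : 1 - ℓ x / ℓ y ≤ (y - x) * (ℓ' x / ℓ x) := by
            rw [hlogdiv] at hlog2
            linarith
          -- cleared form
          have h4 : ℓ x * (ℓ y - ℓ x) ≤ (y - x) * ℓ' x * ℓ y := by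
            have e1 : (1 - ℓ x / ℓ y) * (ℓ x * ℓ y) = ℓ x * (ℓ y - ℓ x) := by
              field_simp
            have e2 : ((y - x) * (ℓ' x / ℓ x)) * (ℓ x * ℓ y) = (y - x) * ℓ' x * ℓ y := by
              field_simp
            have := mul_le_mul_of_nonneg_right h3 (le_of_lt (mul_pos hLx hLy))
            rw [e1, e2] at this
            exact this
          have hd : 0 ≤ 1 / ℓ x - 1 / ℓ y := by
            rw [sub_nonneg]
            apply one_div_le_one_div_of_le hLx hLxy
          have step1 : |q x| * (1 / ℓ x - 1 / ℓ y) ≤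
              (C * (ℓ x) ^ 2 / (x * ℓ' x)) * (1 / ℓ x - 1 / ℓ y) :=
            mul_le_mul_of_nonneg_right habs hd
          have heq : (C * (ℓ x) ^ 2 / (x * ℓ' x)) * (1 / ℓ x - 1 / ℓ y)
              = C * (ℓ x * (ℓ y - ℓ x)) / ((x * ℓ' x) * ℓ y) := by
            field_simp
          have step2 : C * (ℓ x * (ℓ y - ℓ x)) / ((x * ℓ' x) * ℓ y) ≤ C * (lam - 1) := by
            rw [div_le_iff₀ (by positivity)]
            have hyx : y - x ≤ (lam - 1) * x := by nlinarith
            nlinarith [mul_le_mul_of_nonneg_left h4 hC.le,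
              mul_le_mul_of_nonneg_right hyx (mul_nonneg hℓ'x hLy.le),
              mul_pos hLx hLy]
          have step3 : |q x| * (1 / ℓ x - 1 / ℓ y) ≤ C * (lam - 1) := by
            calc |q x| * (1 / ℓ x - 1 / ℓ y) ≤ _ := step1
              _ = C * (ℓ x * (ℓ y - ℓ x)) / ((x * ℓ' x) * ℓ y) := heq
              _ ≤ C * (lam - 1) := step2
          have step4 : -(|q x| * (1 / ℓ x - 1 / ℓ y)) ≤ q x * (1 / ℓ y - 1 / ℓ x) := by
            have : q x * (1 / ℓ x - 1 / ℓ y) ≤ |q x| * (1 / ℓ x - 1 / ℓ y) :=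
              mul_le_mul_of_nonneg_right (le_abs_self _) hd
            nlinarith
          linarith
      have hsplit : q y / ℓ y - q x / ℓ x = (q y - q x) / ℓ y + q x * (1 / ℓ y - 1 / ℓ x) := by
        field_simp
        ring
      rw [hsplit]
      linarith
    -- assemble
    rw [← hν_eq, ← EReal.coe_mul, ← EReal.coe_add]
    rw [nubar, EReal.neg_le, ← EReal.coe_neg]
    apply le_sInf
    rintro z ⟨p, hp, rfl⟩
    simp only
    exact_mod_cast hpt p hp.1 hp.2.1 hp.2.2
  refine ⟨?_, key⟩
  intro lam hlam
  refine lt_of_le_of_lt (key lam hlam) ?_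
  have hν_top : nubar a q lam < ⊤ := hbdd lam hlam
  have hν_nn : 0 ≤ nubar a q lam := hnn q lam hlam
  have hν_bot : nubar a q lam ≠ ⊥ :=
    (lt_of_lt_of_le (by simp : (⊥ : EReal) < 0) hν_nn).ne'
  have hν_eq : (((nubar a q lam).toReal : ℝ) : EReal) = nubar a q lam :=
    EReal.coe_toReal hν_top.ne hν_bot
  rw [← hν_eq, ← EReal.coe_mul, ← EReal.coe_add]
  exact EReal.coe_lt_top _
end

section
/- Let a ≥ 1, A ≥ max(a, e), m > 0, ℓ(x) = (log x)^m. If F : [a,∞) → ℝ is moderately decreasing and |F(x)| ≤ C·x·ℓ(x) for x ≥ A, then F(x)/(x·ℓ(x)) is slowly decreasing on [A,∞). -/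
open Set Filter

/-- `F` is moderately decreasing on `[a,∞)`. -/
def ModeratelyDecreasingOn (F : ℝ → ℝ) (a : ℝ) : Prop :=
  ∃ B₁ B₂ : ℝ, 0 < B₁ ∧ 0 < B₂ ∧ ∃ φ : ℝ → ℝ,
    AntitoneOn φ (Ici a) ∧
    (∀ x, a ≤ x → x ≤ max 1 a → φ x = 1) ∧
    Filter.Tendsto φ Filter.atTop (nhds 0) ∧
    (∀ u v : ℝ, a ≤ u → 0 ≤ v →
      F (u + v) - F u ≥ -B₁ * v - B₂ * max 1 u * φ u)

theorem moderatelyDecreasing_implies_slowlyDecreasing_div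
    (a A m C : ℝ) (ha : 1 ≤ a) (haA : a ≤ A) (hA : Real.exp 1 ≤ A) (hm : 0 < m)
    (F : ℝ → ℝ) (hmod : ModeratelyDecreasingOn F a)
    (hbound : ∀ x, A ≤ x → |F x| ≤ C * (x * (Real.log x) ^ m)) :
    SlowlyDecreasingOn (fun x => F x / (x * (Real.log x) ^ m)) A := by
  obtain ⟨B₁, B₂, hB₁, hB₂, φ, hφanti, hφ1, hφ0, hF⟩ := hmod
  have hApos : (0:ℝ) < A := lt_of_lt_of_le (Real.exp_pos 1) hA
  have hlogA : 1 ≤ Real.log A := (Real.le_log_iff_exp_le hApos).2 hA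
  have hC : 0 ≤ C := by
    have h := hbound A le_rfl
    have hL : 0 < A * Real.log A ^ m :=
      mul_pos hApos (Real.rpow_pos_of_pos (by linarith) m)
    nlinarith [abs_nonneg (F A)]
  have hφnn : ∀ x, a ≤ x → 0 ≤ φ x := fun x hx =>
    le_of_tendsto hφ0 (Filter.eventually_atTop.2
      ⟨x, fun z hz => hφanti hx (hx.trans hz) hz⟩)
  intro ε hε
  -- continuity argument for choosing lam
  have hc : ContinuousAt (fun t : ℝ => B₁ * (t - 1) +
      C * (1 - t⁻¹ * (1 + Real.log t) ^ (-m))) 1 := by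
    have h1 : ContinuousAt Real.log 1 := Real.continuousAt_log one_ne_zero
    have h2 : ContinuousAt (fun t : ℝ => (1 + Real.log t) ^ (-m)) 1 := by
      apply ContinuousAt.rpow_const (continuousAt_const.add h1)
      left
      simp [Real.log_one]
    exact (continuousAt_const.mul (continuousAt_id.sub continuousAt_const)).add
      (continuousAt_const.mul (continuousAt_const.sub
        ((continuousAt_inv₀ one_ne_zero).mul h2)))
  have h0 : (fun t : ℝ => B₁ * (t - 1) +
      C * (1 - t⁻¹ * (1 + Real.log t) ^ (-m))) 1 = 0 := by
    norm_num [Real.log_one, Real.one_rpow]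
  have htend : Tendsto (fun t : ℝ => B₁ * (t - 1) +
      C * (1 - t⁻¹ * (1 + Real.log t) ^ (-m))) (nhdsWithin 1 (Ioi 1)) (nhds 0) :=
    h0 ▸ hc.tendsto.mono_left nhdsWithin_le_nhds
  have hev : ∀ᶠ t in nhdsWithin (1:ℝ) (Ioi 1), B₁ * (t - 1) +
      C * (1 - t⁻¹ * (1 + Real.log t) ^ (-m)) < ε / 2 :=
    htend.eventually_lt_const (by linarith)
  obtain ⟨lam, hglam, hlam1⟩ := (hev.and self_mem_nhdsWithin).exists
  have hlam1 : 1 < lam := hlam1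
  have hlampos : (0:ℝ) < lam := by linarith
  have hloglam : 0 ≤ Real.log lam := Real.log_nonneg hlam1.le
  -- choose X
  have hφev : ∀ᶠ x in atTop, φ x < ε / (2 * B₂) :=
    hφ0.eventually_lt_const (by positivity)
  obtain ⟨X, hXA, hφX⟩ := ((eventually_ge_atTop A).and hφev).exists
  refine ⟨lam, hlam1, X, hXA, ?_⟩
  intro x y hXx hxy hylam
  have hAx : A ≤ x := hXA.trans hXx
  have hx0 : 0 < x := hApos.trans_le hAx
  have hAy : A ≤ y := hAx.trans hxy
  have hy0 : 0 < y := hApos.trans_le hAy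
  have hlogx : 1 ≤ Real.log x := (Real.le_log_iff_exp_le hx0).2 (hA.trans hAx)
  have hlogy : 1 ≤ Real.log y := (Real.le_log_iff_exp_le hy0).2 (hA.trans hAy)
  have hlogxy : Real.log x ≤ Real.log y := Real.log_le_log hx0 hxy
  set Lx := x * Real.log x ^ m with hLxdef
  set Ly := y * Real.log y ^ m with hLydef
  have hLxpos : 0 < Lx := mul_pos hx0 (Real.rpow_pos_of_pos (by linarith) m)
  have hLypos : 0 < Ly := mul_pos hy0 (Real.rpow_pos_of_pos (by linarith) m)
  have hxLx : x ≤ Lx := by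
    have h1 : 1 ≤ Real.log x ^ m := Real.one_le_rpow hlogx hm.le
    nlinarith
  have hLxLy : Lx ≤ Ly := by
    apply mul_le_mul hxy (Real.rpow_le_rpow (by linarith) hlogxy hm.le)
      (Real.rpow_nonneg (by linarith) m) hy0.le
  have hxLy : x ≤ Ly := hxLx.trans hLxLy
  -- bound on Ly
  have hly2 : Real.log y ≤ (1 + Real.log lam) * Real.log x := by
    have h1 : Real.log y ≤ Real.log (lam * x) := Real.log_le_log hy0 hylam
    rw [Real.log_mul (ne_of_gt hlampos) (ne_of_gt hx0)] at h1
    nlinarith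
  have hLyb : Ly ≤ lam * (1 + Real.log lam) ^ m * Lx := by
    have h2 : Real.log y ^ m ≤ ((1 + Real.log lam) * Real.log x) ^ m :=
      Real.rpow_le_rpow (by linarith) hly2 hm.le
    rw [Real.mul_rpow (by linarith) (by linarith)] at h2
    calc Ly ≤ (lam * x) * ((1 + Real.log lam) ^ m * Real.log x ^ m) :=
          mul_le_mul hylam h2 (Real.rpow_nonneg (by linarith) m)
            (by positivity)
      _ = lam * (1 + Real.log lam) ^ m * Lx := by rw [hLxdef]; ring
  have hrLy : lam⁻¹ * (1 + Real.log lam) ^ (-m) * Ly ≤ Lx := by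
    have hrpos : 0 < lam⁻¹ * (1 + Real.log lam) ^ (-m) := by
      have := Real.rpow_pos_of_pos (show (0:ℝ) < 1 + Real.log lam by linarith) (-m)
      positivity
    have hne : ((1 + Real.log lam) ^ m : ℝ) ≠ 0 :=
      ne_of_gt (Real.rpow_pos_of_pos (by linarith) m)
    calc lam⁻¹ * (1 + Real.log lam) ^ (-m) * Ly
        ≤ lam⁻¹ * (1 + Real.log lam) ^ (-m) * (lam * (1 + Real.log lam) ^ m * Lx) :=
          mul_le_mul_of_nonneg_left hLyb hrpos.le
      _ = Lx := by
          rw [Real.rpow_neg (by linarith)]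
          field_simp
  -- moderate decrease bound
  have hx1 : (1:ℝ) ≤ x := by linarith
  have hFb := hF x (y - x) (haA.trans hAx) (by linarith)
  rw [show x + (y - x) = y by ring, max_eq_right hx1] at hFb
  have haX : a ≤ X := haA.trans hXA
  have hφx : φ x ≤ φ X := hφanti haX (haX.trans hXx) hXx
  have hφxnn : 0 ≤ φ x := hφnn x (haX.trans hXx)
  have hφXnn : 0 ≤ φ X := hφnn X haX
  have hnum : F y - F x ≥ -((B₁ * (lam - 1) + B₂ * φ X) * x) := by
    have h1 : B₂ * x * φ x ≤ B₂ * x * φ X :=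
      mul_le_mul_of_nonneg_left hφx (by positivity)
    have h2 : B₁ * (y - x) ≤ B₁ * ((lam - 1) * x) :=
      mul_le_mul_of_nonneg_left (by linarith) hB₁.le
    linarith [hFb, h1, h2]
  have hK : 0 ≤ B₁ * (lam - 1) + B₂ * φ X :=
    add_nonneg (mul_nonneg hB₁.le (by linarith)) (mul_nonneg hB₂.le hφXnn)
  have hT1 : (F y - F x) / Ly ≥ -(B₁ * (lam - 1) + B₂ * φ X) := by
    rw [ge_iff_le, le_div_iff₀ hLypos]
    have h3 : (B₁ * (lam - 1) + B₂ * φ X) * x ≤ (B₁ * (lam - 1) + B₂ * φ X) * Ly :=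
      mul_le_mul_of_nonneg_left hxLy hK
    linarith [hnum, h3]
  have hFx := hbound x hAx
  have hT2 : F x * (Lx - Ly) / (Lx * Ly) ≥
      -(C * (1 - lam⁻¹ * (1 + Real.log lam) ^ (-m))) := by
    have hub : F x ≤ C * Lx := (le_abs_self _).trans hFx
    have h1' := mul_le_mul_of_nonneg_right hub (sub_nonneg.2 hLxLy)
    have h1 : F x * (Lx - Ly) ≥ -(C * Lx) * (Ly - Lx) := by linarith [h1']
    rw [ge_iff_le, le_div_iff₀ (mul_pos hLxpos hLypos)]
    linarith [h1, mul_nonneg (mul_nonneg hC hLxpos.le) (sub_nonneg.2 hrLy)]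
  have hB2e : B₂ * φ X < ε / 2 := by
    have h1 : B₂ * φ X < B₂ * (ε / (2 * B₂)) :=
      mul_lt_mul_of_pos_left hφX hB₂
    have h2 : B₂ * (ε / (2 * B₂)) = ε / 2 := by field_simp
    linarith
  have hid : F y / Ly - F x / Lx =
      (F y - F x) / Ly + F x * (Lx - Ly) / (Lx * Ly) := by
    field_simp
    ring
  show F y / Ly - F x / Lx ≥ -ε
  have hglam' : B₁ * (lam - 1) +
      C * (1 - lam⁻¹ * (1 + Real.log lam) ^ (-m)) < ε / 2 := hglam
  linarith [hT1, hT2, hid]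
end

section
/- There exists a function F : [1,∞) → ℝ with F(x) = O(x) and F(x)/x slowly decreasing, such that F is not moderately decreasing: for every constant C > 0 there exist sequences x_k → ∞ and y_k > 0 with F(x_k + y_k) - F(x_k) + C·y_k ≤ -c·x_k for some c > 0. -/
open Set Filter

/-- The drop-size type of region `n`: each value `m ≥ 1` occurs infinitely often. -/
def mseq (n : ℕ) : ℕ := n.unpair.1 + 1

/-- Index of the region `[4^n, 4^(n+1))` containing `x`. -/
noncomputable def reg (x : ℝ) : ℕ := ⌊Real.logb 4 x⌋₊

/-- Tent function: in region `n` of type `m`, drops from `0` at `4^n` with slope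
`4m` (in `t = x/4^n`), floor `-(2-t)/m`, back to `0` by `t = 2`. -/
noncomputable def ff (x : ℝ) : ℝ :=
  -(max 0 (min (4 * (mseq (reg x) : ℝ) * (x / 4 ^ reg x - 1))
      ((2 - x / 4 ^ reg x) / (mseq (reg x) : ℝ))))

noncomputable def FF (x : ℝ) : ℝ := x * ff x

lemma one_le_mseq (n : ℕ) : (1:ℝ) ≤ (mseq n : ℝ) := by
  have : 1 ≤ mseq n := Nat.succ_le_succ (Nat.zero_le _)
  exact_mod_cast this

lemma mseq_pos (n : ℕ) : (0:ℝ) < (mseq n : ℝ) := lt_of_lt_of_le one_pos (one_le_mseq n)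

lemma four_pow_pos (n : ℕ) : (0:ℝ) < 4 ^ n := by positivity

lemma four_pow_reg_le {x : ℝ} (hx : 1 ≤ x) : (4:ℝ) ^ reg x ≤ x := by
  have hx0 : 0 < x := lt_of_lt_of_le one_pos hx
  have h1 : (reg x : ℝ) ≤ Real.logb 4 x := Nat.floor_le (Real.logb_nonneg (by norm_num) hx)
  calc (4:ℝ) ^ reg x = (4:ℝ) ^ (reg x : ℝ) := by rw [Real.rpow_natCast]
    _ ≤ (4:ℝ) ^ Real.logb 4 x := Real.rpow_le_rpow_of_exponent_le (by norm_num) h1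
    _ = x := Real.rpow_logb (by norm_num) (by norm_num) hx0

lemma lt_four_pow_reg {x : ℝ} (hx : 1 ≤ x) : x < (4:ℝ) ^ (reg x + 1) := by
  have hx0 : 0 < x := lt_of_lt_of_le one_pos hx
  have h1 : Real.logb 4 x < (reg x : ℝ) + 1 := Nat.lt_floor_add_one _
  calc x = (4:ℝ) ^ Real.logb 4 x := (Real.rpow_logb (by norm_num) (by norm_num) hx0).symm
    _ < (4:ℝ) ^ ((reg x : ℝ) + 1) := Real.rpow_lt_rpow_of_exponent_lt (by norm_num) h1
    _ = (4:ℝ) ^ (reg x + 1) := by rw [← Real.rpow_natCast]; norm_num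

lemma reg_eq {n : ℕ} {x : ℝ} (h1 : (4:ℝ)^n ≤ x) (h2 : x < (4:ℝ)^(n+1)) : reg x = n := by
  have hp : (0:ℝ) < 4 ^ n := four_pow_pos n
  have hx0 : 0 < x := lt_of_lt_of_le hp h1
  have hlogn : Real.logb 4 ((4:ℝ)^n) = n := by
    rw [← Real.rpow_natCast, Real.logb_rpow (by norm_num) (by norm_num)]
  have hlogn1 : Real.logb 4 ((4:ℝ)^(n+1)) = (n+1 : ℕ) := by
    rw [← Real.rpow_natCast, Real.logb_rpow (by norm_num) (by norm_num)]
  have hl : (n : ℝ) ≤ Real.logb 4 x := by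
    rw [← hlogn]; exact Real.logb_le_logb_of_le (by norm_num) hp h1
  have hr : Real.logb 4 x < (n : ℝ) + 1 := by
    have := Real.logb_lt_logb (b := 4) (by norm_num) hx0 h2
    rw [hlogn1] at this; exact_mod_cast this
  have h0 : 0 ≤ Real.logb 4 x := le_trans (by positivity) hl
  exact Nat.floor_eq_iff h0 |>.mpr ⟨hl, by exact_mod_cast hr⟩

lemma ff_nonpos (x : ℝ) : ff x ≤ 0 := by
  unfold ff
  simp only [neg_nonpos]
  exact le_max_left _ _

/-- Lower bound by tent depth. -/
lemma ff_ge {x : ℝ} (hx : 1 ≤ x) : -(1 / (mseq (reg x) : ℝ)) ≤ ff x := by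
  have hm := mseq_pos (reg x)
  have ht : 1 ≤ x / 4 ^ reg x := by
    rw [le_div_iff₀ (four_pow_pos _)]
    simpa using four_pow_reg_le hx
  unfold ff
  rw [neg_le_neg_iff]
  apply max_le
  · positivity
  · calc min _ ((2 - x / 4 ^ reg x) / (mseq (reg x) : ℝ))
        ≤ (2 - x / 4 ^ reg x) / (mseq (reg x) : ℝ) := min_le_right _ _
      _ ≤ 1 / (mseq (reg x) : ℝ) := by gcongr; linarith

/-- Lipschitz-type lower bound on the decrease of `ff`. -/
lemma ff_lip {x y : ℝ} (hx : 1 ≤ x) (hxy : x ≤ y) :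
    -(4 * (mseq (reg y) : ℝ) * (y - x) / 4 ^ reg y) ≤ ff y - ff x := by
  have hy : (1:ℝ) ≤ y := le_trans hx hxy
  have hm1 : (1:ℝ) ≤ (mseq (reg y) : ℝ) := one_le_mseq (reg y)
  have hP : (0:ℝ) < 4 ^ reg y := four_pow_pos (reg y)
  have hPy : (4:ℝ) ^ reg y ≤ y := four_pow_reg_le hy
  have hy4 : y < (4:ℝ) ^ (reg y + 1) := lt_four_pow_reg hy
  have hd0 : 0 ≤ 4 * (mseq (reg y) : ℝ) * (y - x) / 4 ^ reg y := by
    apply div_nonneg _ (le_of_lt hP)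
    have : 0 ≤ y - x := by linarith
    positivity
  rcases le_or_gt ((4:ℝ) ^ reg y) x with h | h
  · -- same region
    have hrx : reg x = reg y := reg_eq h (lt_of_le_of_lt hxy hy4)
    unfold ff
    rw [hrx]
    set n := reg y with hn
    set m := (mseq n : ℝ) with hmm
    set P := (4:ℝ) ^ n with hPP
    set d := 4 * m * (y - x) / P with hd
    set ax := 4 * m * (x / P - 1) with hax
    set bx := (2 - x / P) / m with hbx
    set ay := 4 * m * (y / P - 1) with hay
    set by' := (2 - y / P) / m with hby
    have key : max 0 (min ay by') ≤ max 0 (min ax bx) + d := by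
      apply max_le
      · have := le_max_left (0:ℝ) (min ax bx); linarith
      · have h1 : ay = ax + d := by
          rw [hay, hax, hd]; field_simp; ring
        have h2 : by' ≤ bx + d := by
          rw [hby, hbx, hd]
          have hb : (2 - y / P) / m ≤ (2 - x / P) / m := by
            have hxp : x / P ≤ y / P := by gcongr
            gcongr <;> linarith
          linarith
        calc min ay by' ≤ min (ax + d) (bx + d) := le_min
              (le_trans (min_le_left _ _) (le_of_eq h1))
              (le_trans (min_le_right _ _) h2)
          _ = min ax bx + d := (min_add_add_right _ _ _)
          _ ≤ max 0 (min ax bx) + d := by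
              have := le_max_right (0:ℝ) (min ax bx); linarith
    linarith
  · -- fresh region: x before the start of y's region
    have h1 : ff x ≤ 0 := ff_nonpos x
    have h2 : -(4 * (mseq (reg y) : ℝ) * (y - x) / 4 ^ reg y) ≤ ff y := by
      unfold ff
      rw [neg_le_neg_iff]
      apply max_le hd0
      calc min (4 * (mseq (reg y) : ℝ) * (y / 4 ^ reg y - 1)) _
          ≤ 4 * (mseq (reg y) : ℝ) * (y / 4 ^ reg y - 1) := min_le_left _ _
        _ = 4 * (mseq (reg y) : ℝ) * (y - 4 ^ reg y) / 4 ^ reg y := by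
            field_simp
        _ ≤ 4 * (mseq (reg y) : ℝ) * (y - x) / 4 ^ reg y := by
            gcongr <;> linarith
    linarith

lemma reg_pow (n : ℕ) : reg ((4:ℝ)^n) = n := by
  apply reg_eq (le_refl _)
  have h : (4:ℝ)^(n+1) = 4^n * 4 := by ring
  rw [h]; nlinarith [four_pow_pos n]

lemma ff_pow (n : ℕ) : ff ((4:ℝ)^n) = 0 := by
  unfold ff
  rw [reg_pow]
  have h1 : (4:ℝ)^n / 4^n = 1 := div_self (ne_of_gt (four_pow_pos n))
  rw [h1]
  have hm0 : (0:ℝ) < (mseq n : ℝ) := mseq_pos n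
  have h2 : 4 * (mseq n : ℝ) * ((1:ℝ) - 1) = 0 := by ring
  rw [h2, min_eq_left (by positivity), max_eq_right (le_refl 0), neg_zero]

lemma ff_bot (n : ℕ) :
    ff ((4:ℝ)^n * (1 + 1/(8*(mseq n:ℝ)^2))) = -(1/(2*(mseq n:ℝ))) := by
  have hm : (1:ℝ) ≤ (mseq n:ℝ) := one_le_mseq n
  have hm0 : (0:ℝ) < (mseq n:ℝ) := mseq_pos n
  have hP : (0:ℝ) < (4:ℝ)^n := four_pow_pos n
  set m := (mseq n : ℝ) with hmm
  have hs0 : (0:ℝ) < 1/(8*m^2) := by positivity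
  have hs1 : 1/(8*m^2) ≤ 1/8 := by
    apply one_div_le_one_div_of_le (by norm_num)
    nlinarith
  have hreg : reg ((4:ℝ)^n * (1 + 1/(8*m^2))) = n := by
    apply reg_eq
    · nlinarith
    · have h4 : (4:ℝ)^(n+1) = 4^n * 4 := by ring
      rw [h4]; nlinarith
  unfold ff
  rw [hreg, ← hmm]
  have ht : (4:ℝ)^n * (1 + 1/(8*m^2)) / 4^n = 1 + 1/(8*m^2) := by
    field_simp
  rw [ht]
  have ha : 4 * m * (1 + 1/(8*m^2) - 1) = 1/(2*m) := by
    field_simp; ring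
  rw [ha]
  have hb : 1/(2*m) ≤ (2 - (1 + 1/(8*m^2)))/m := by
    rw [div_le_div_iff₀ (by positivity) hm0]
    nlinarith [mul_le_mul_of_nonneg_left hs1 hm0.le, hm0, hm]
  rw [min_eq_left hb, max_eq_right (by positivity)]

lemma nat_le_four_pow (n : ℕ) : (n:ℝ) ≤ (4:ℝ)^n := by
  have h1 : n < 2^n := Nat.lt_two_pow_self
  have h2 : (2:ℕ)^n ≤ 4^n := Nat.pow_le_pow_left (by norm_num) n
  calc (n:ℝ) ≤ ((2^n : ℕ):ℝ) := by exact_mod_cast le_of_lt h1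
    _ ≤ ((4^n : ℕ):ℝ) := by exact_mod_cast h2
    _ = (4:ℝ)^n := by push_cast; ring
theorem exists_slowlyDecreasing_div_not_moderatelyDecreasing :
    ∃ F : ℝ → ℝ,
      (∃ K : ℝ, ∀ x, 1 ≤ x → |F x| ≤ K * x) ∧
      SlowlyDecreasingOn (fun x => F x / x) 1 ∧
      (∀ C : ℝ, 0 < C → ∃ c : ℝ, 0 < c ∧
        ∀ N : ℝ, ∃ x : ℝ, N ≤ x ∧ 1 ≤ x ∧ ∃ y : ℝ, 0 < y ∧
          F (x + y) - F x + C * y ≤ -c * x) := by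
  refine ⟨FF, ⟨1, ?_⟩, ?_, ?_⟩
  · -- |FF x| ≤ x
    intro x hx
    have hm0 : (0:ℝ) < (mseq (reg x) : ℝ) := mseq_pos (reg x)
    have hm1 : (1:ℝ) ≤ (mseq (reg x) : ℝ) := one_le_mseq (reg x)
    have hinv : 1 / (mseq (reg x) : ℝ) ≤ 1 := by
      rw [div_le_one hm0]; exact hm1
    have h1 : |ff x| ≤ 1 := by
      rw [abs_le]
      constructor
      · have := ff_ge hx; linarith
      · linarith [ff_nonpos x]
    calc |FF x| = |x| * |ff x| := abs_mul x (ff x)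
      _ ≤ |x| * 1 := mul_le_mul_of_nonneg_left h1 (abs_nonneg x)
      _ = 1 * x := by rw [mul_one, one_mul, abs_of_nonneg (by linarith)]
  · -- slowly decreasing
    intro ε hε
    set M : ℕ := max 1 ⌈1/ε⌉₊ with hM
    have hM1 : (1:ℝ) ≤ (M:ℝ) := by exact_mod_cast le_max_left 1 ⌈1/ε⌉₊
    have hM0 : (0:ℝ) < (M:ℝ) := by linarith
    have hMε : 1/ε ≤ (M:ℝ) :=
      le_trans (Nat.le_ceil _) (by exact_mod_cast le_max_right 1 ⌈1/ε⌉₊)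
    refine ⟨1 + ε/(32*(M:ℝ)), by
      have : 0 < ε/(32*(M:ℝ)) := by positivity
      linarith, 1, le_refl 1, ?_⟩
    intro x y hx hxy hyl
    have hx0 : (0:ℝ) < x := by linarith
    have hy1 : (1:ℝ) ≤ y := le_trans hx hxy
    have hy0 : (0:ℝ) < y := by linarith
    show FF y / y - FF x / x ≥ -ε
    have hfx : FF x / x = ff x := by
      unfold FF; rw [mul_comm, mul_div_assoc, div_self (ne_of_gt hx0), mul_one]
    have hfy : FF y / y = ff y := by
      unfold FF; rw [mul_comm, mul_div_assoc, div_self (ne_of_gt hy0), mul_one]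
    rw [hfx, hfy]
    have hm1 : (1:ℝ) ≤ (mseq (reg y) : ℝ) := one_le_mseq (reg y)
    have hm0 : (0:ℝ) < (mseq (reg y) : ℝ) := mseq_pos (reg y)
    rcases le_or_gt ((mseq (reg y)):ℝ) (M:ℝ) with hc | hc
    · -- big slow drop: Lipschitz bound
      have hlip := ff_lip hx hxy
      have hP : (0:ℝ) < (4:ℝ)^(reg y) := four_pow_pos (reg y)
      have hy4 : y < (4:ℝ)^(reg y + 1) := lt_four_pow_reg hy1
      have hx4 : x ≤ 4 * (4:ℝ)^(reg y) := by
        have h4 : (4:ℝ)^(reg y + 1) = 4 * 4^(reg y) := by ring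
        linarith [lt_of_le_of_lt hxy hy4]
      have hd : 4 * ((mseq (reg y)):ℝ) * (y - x) / 4 ^ (reg y) ≤ ε := by
        rw [div_le_iff₀ hP]
        have ha : (ε/(32*(M:ℝ))) * (32*(M:ℝ)) = ε := by field_simp
        have h1 : y - x ≤ (ε/(32*(M:ℝ))) * x := by
          have : y ≤ (1 + ε/(32*(M:ℝ))) * x := hyl
          nlinarith
        have ha0 : 0 ≤ ε/(32*(M:ℝ)) := by positivity
        nlinarith [mul_le_mul_of_nonneg_left hx4 ha0,
          mul_le_mul_of_nonneg_left h1 (by linarith : (0:ℝ) ≤ 4 * ((mseq (reg y)):ℝ)),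
          mul_le_mul_of_nonneg_right hc (by positivity : (0:ℝ) ≤ (ε/(32*(M:ℝ))) * (4 * 4^(reg y))),
          hP, hm1]
      linarith
    · -- small drop
      have h1 : ff x ≤ 0 := ff_nonpos x
      have h2 : -(1/((mseq (reg y)):ℝ)) ≤ ff y := ff_ge hy1
      have h3 : 1/((mseq (reg y)):ℝ) ≤ ε := by
        rw [div_le_iff₀ hm0]
        have he : ε * (1/ε) = 1 := by field_simp
        nlinarith [mul_le_mul_of_nonneg_left hMε (le_of_lt hε),
          mul_lt_mul_of_pos_left hc hε, he]
      linarith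
  · -- not moderately decreasing
    intro C hC
    set m : ℕ := max 1 ⌈C⌉₊ with hm
    have hm1 : (1:ℝ) ≤ (m:ℝ) := by exact_mod_cast le_max_left 1 ⌈C⌉₊
    have hmC : C ≤ (m:ℝ) :=
      le_trans (Nat.le_ceil C) (by exact_mod_cast le_max_right 1 ⌈C⌉₊)
    refine ⟨1/(4*(m:ℝ)), by positivity, ?_⟩
    intro N
    set j := ⌈N⌉₊ with hj
    set n := Nat.pair (m-1) j with hn
    have hm1' : 1 ≤ m := le_max_left 1 ⌈C⌉₊
    have hmn : mseq n = m := by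
      simp only [mseq, hn, Nat.unpair_pair]
      omega
    have hjn : j ≤ n := Nat.right_le_pair _ _
    have hP : (0:ℝ) < (4:ℝ)^n := four_pow_pos n
    refine ⟨(4:ℝ)^n, ?_, one_le_pow₀ (by norm_num), (4:ℝ)^n * (1/(8*(m:ℝ)^2)), by positivity, ?_⟩
    · calc N ≤ (j:ℝ) := Nat.le_ceil N
        _ ≤ (n:ℝ) := by exact_mod_cast hjn
        _ ≤ (4:ℝ)^n := nat_le_four_pow n
    · have hx0 : FF ((4:ℝ)^n) = 0 := by unfold FF; rw [ff_pow]; ring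
      have hb := ff_bot n
      rw [hmn] at hb
      have hsum : (4:ℝ)^n + (4:ℝ)^n * (1/(8*(m:ℝ)^2)) = (4:ℝ)^n * (1 + 1/(8*(m:ℝ)^2)) := by
        ring
      rw [hsum, hx0]
      have hbot : FF ((4:ℝ)^n * (1 + 1/(8*(m:ℝ)^2)))
          = ((4:ℝ)^n * (1 + 1/(8*(m:ℝ)^2))) * (-(1/(2*(m:ℝ)))) := by
        unfold FF; rw [hb]
      rw [hbot]
      have e1 : ((2:ℝ)*(m:ℝ)) * (1/(2*(m:ℝ))) = 1 := by field_simp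
      have e2 : ((8:ℝ)*(m:ℝ)^2) * (1/(8*(m:ℝ)^2)) = 1 := by field_simp
      have e3 : ((4:ℝ)*(m:ℝ)) * (1/(4*(m:ℝ))) = 1 := by field_simp
      have hs0 : (0:ℝ) < 1/(8*(m:ℝ)^2) := by positivity
      have hi2 : (0:ℝ) < 1/(2*(m:ℝ)) := by positivity
      have hi4 : (0:ℝ) < 1/(4*(m:ℝ)) := by positivity
      nlinarith [mul_pos hP hs0, mul_pos hP hi2, mul_pos hP hi4,
        mul_le_mul_of_nonneg_right hmC (le_of_lt (mul_pos hP hs0)),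
        mul_pos (mul_pos hP hs0) hi2, hP, hm1, e1, e2, e3]
end

section
/- For ω > -1 and all real t, the function β(ω,t) defined as t^ω·e^{-t}·(1-e^{-t})/Γ(ω+1) for t > 0 and 0 for t ≤ 0 satisfies |β(ω,t)| ≤ 1/√π. -/
open Real

open Set

section Helpers

lemma rpow_mul_exp_le {a t : ℝ} (ha : 0 < a) (ht : 0 < t) :
    t ^ a * exp (-t) ≤ a ^ a * exp (-a) := by
  rw [rpow_def_of_pos ht, rpow_def_of_pos ha, ← exp_add, ← exp_add]
  apply exp_le_exp.2
  have h := Real.log_le_sub_one_of_pos (div_pos ht ha)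
  rw [Real.log_div ht.ne' ha.ne'] at h
  have h3 : a * (t / a) = t := mul_div_cancel₀ t ha.ne'
  nlinarith

lemma convexOn_affine (α β : ℝ) : ConvexOn ℝ (Ioi (0:ℝ)) (fun x => α + β * x) := by
  refine ⟨convex_Ioi _, fun x _ y _ a b _ _ hab => le_of_eq ?_⟩
  simp only [smul_eq_mul]
  linear_combination (-α) * hab

lemma convexOn_le_max {f : ℝ → ℝ} (hf : ConvexOn ℝ (Ioi (0:ℝ)) f) {a b x m : ℝ}
    (ha : 0 < a) (hab : a ≤ b) (hx : x ∈ Icc a b) (h1 : f a ≤ m) (h2 : f b ≤ m) : f x ≤ m := by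
  have := hf.le_on_segment (mem_Ioi.2 ha) (mem_Ioi.2 (ha.trans_le hab))
    (by rwa [segment_eq_Icc hab])
  exact this.trans (max_le h1 h2)

lemma convexOn_mul_log' : ConvexOn ℝ (Ioi (0:ℝ)) (fun x => x * log x) :=
  Real.convexOn_mul_log.subset (Ioi_subset_Ici le_rfl) (convex_Ioi _)

lemma convexOn_neg_log : ConvexOn ℝ (Ioi (0:ℝ)) (fun x => -log x) :=
  strictConcaveOn_log_Ioi.concaveOn.neg

lemma log_secant {a b x : ℝ} (ha : 0 < a) (hab : a < b) (hx : x ∈ Icc a b) :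
    (b - x)/(b - a) * log a + (x - a)/(b - a) * log b ≤ log x := by
  have hb : 0 < b := ha.trans hab
  have hba : (0:ℝ) < b - a := by linarith
  have w1 : (0:ℝ) ≤ (b - x)/(b - a) := by apply div_nonneg _ hba.le; linarith [hx.2]
  have w2 : (0:ℝ) ≤ (x - a)/(b - a) := by apply div_nonneg _ hba.le; linarith [hx.1]
  have w3 : (b - x)/(b - a) + (x - a)/(b - a) = 1 := by field_simp; ring
  have h := strictConcaveOn_log_Ioi.concaveOn.2 (mem_Ioi.2 ha) (mem_Ioi.2 hb) w1 w2 w3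
  simp only [smul_eq_mul] at h
  have hxeq : (b - x)/(b - a) * a + (x - a)/(b - a) * b = x := by field_simp; ring
  rwa [hxeq] at h

end Helpers

section GammaValues

lemma Gamma32 : Real.Gamma (3/2) = Real.sqrt π / 2 := by
  have h : (3/2:ℝ) = 1/2 + 1 := by norm_num
  rw [h, Real.Gamma_add_one (by norm_num), Real.Gamma_one_half_eq]; ring

lemma Gamma52 : Real.Gamma (5/2) = 3/4 * Real.sqrt π := by
  have h : (5/2:ℝ) = 3/2 + 1 := by norm_num
  rw [h, Real.Gamma_add_one (by norm_num), Gamma32]; ring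

lemma sqrtpi_lt_two : Real.sqrt π < 2 := by
  nlinarith [Real.sq_sqrt Real.pi_pos.le, Real.sqrt_nonneg π, Real.pi_lt_d2,
    sq_nonneg (Real.sqrt π - 2)]

lemma L32_nonpos : log (Real.sqrt π / 2) ≤ 0 :=
  Real.log_nonpos (by positivity) (by nlinarith [sqrtpi_lt_two])

lemma two_L32 : 2 * log (Real.sqrt π / 2) = log (π / 4) := by
  rw [show (π/4 : ℝ) = (Real.sqrt π / 2)^2 by
    rw [div_pow, Real.sq_sqrt Real.pi_pos.le]; norm_num, Real.log_pow]
  push_cast; ring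

lemma C1 {y : ℝ} (hy : y ∈ Icc (1:ℝ) (3/2)) :
    log (Real.sqrt π / 2) * (4 - 2*y) ≤ log (Real.Gamma y) := by
  rcases eq_or_lt_of_le hy.2 with heq | hlt
  · rw [heq, Gamma32]; norm_num
  · have h := Real.convexOn_log_Gamma.secant_mono (a := (3/2:ℝ)) (x := y) (y := 2)
      (by norm_num) (mem_Ioi.2 (by linarith [hy.1])) (by norm_num)
      (ne_of_lt hlt) (by norm_num) (by linarith)
    simp only [Function.comp_apply] at h
    rw [Real.Gamma_two, Real.log_one, Gamma32] at h
    have hneg : y - 3/2 < 0 := by linarith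
    rw [div_le_iff_of_neg hneg] at h
    have h2 : (0 - log (Real.sqrt π / 2)) / (2 - 3/2) = -2 * log (Real.sqrt π / 2) := by ring
    rw [h2] at h
    nlinarith [h]

lemma C2 {y : ℝ} (hy : y ∈ Icc (3/2:ℝ) 2) :
    (y - 2) * (2 * log (3/4 * Real.sqrt π)) ≤ log (Real.Gamma y) := by
  rcases eq_or_lt_of_le hy.2 with heq | hlt
  · rw [heq, Real.Gamma_two, Real.log_one]; norm_num
  · have h := Real.convexOn_log_Gamma.secant_mono (a := (2:ℝ)) (x := y) (y := 5/2)
      (by norm_num) (mem_Ioi.2 (by linarith [hy.1])) (by norm_num)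
      (ne_of_lt hlt) (by norm_num) (by linarith)
    simp only [Function.comp_apply] at h
    rw [Real.Gamma_two, Real.log_one, Gamma52] at h
    have hneg : y - 2 < 0 := by linarith
    rw [div_le_iff_of_neg hneg] at h
    have h2 : (log (3/4 * Real.sqrt π) - 0) / (5/2 - 2) = 2 * log (3/4 * Real.sqrt π) := by ring
    rw [h2] at h
    nlinarith [h]

lemma C2' {y : ℝ} (hy : y ∈ Icc (3/2:ℝ) 2) :
    log (Real.sqrt π / 2) * (2*y - 2) ≤ log (Real.Gamma y) := by
  rcases eq_or_lt_of_le hy.1 with heq | hlt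
  · rw [← heq, Gamma32]; norm_num
  · have h := Real.convexOn_log_Gamma.secant_mono (a := (1:ℝ)) (x := (3/2:ℝ)) (y := y)
      (by norm_num) (by norm_num) (mem_Ioi.2 (by linarith))
      (by norm_num) (by intro hc; rw [hc] at hlt; norm_num at hlt) (by linarith)
    simp only [Function.comp_apply] at h
    rw [Real.Gamma_one, Real.log_one, Gamma32] at h
    have hpos : (0:ℝ) < y - 1 := by linarith
    rw [div_le_div_iff₀ (by norm_num) hpos] at h
    nlinarith [h]

lemma G12 {y : ℝ} (hy : y ∈ Icc (1:ℝ) 2) : π / 4 ≤ Real.Gamma y := by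
  have hΓpos : 0 < Real.Gamma y := Real.Gamma_pos_of_pos (by linarith [hy.1])
  have hlog : log (π/4) ≤ log (Real.Gamma y) := by
    rw [← two_L32]
    rcases le_total y (3/2) with h | h
    · have := C1 ⟨hy.1, h⟩
      nlinarith [L32_nonpos, hy.1]
    · have := C2' ⟨h, hy.2⟩
      nlinarith [L32_nonpos, hy.2]
  calc π/4 = exp (log (π/4)) := (Real.exp_log (by positivity)).symm
  _ ≤ exp (log (Real.Gamma y)) := exp_le_exp.2 hlog
  _ = Real.Gamma y := Real.exp_log hΓpos

end GammaValues

section Numerics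

lemma log3_lt : log 3 ≤ 11/10 := by
  have h : (3:ℝ) ≤ exp (11/10) := by
    have hp : ((3:ℝ))^(10:ℕ) ≤ (exp (11/10))^(10:ℕ) := by
      have h1 : (exp (11/10:ℝ))^(10:ℕ) = exp 11 := by
        rw [← Real.exp_nat_mul]; norm_num
      rw [h1, show (11:ℝ) = ((11:ℕ):ℝ) by norm_num, ← Real.exp_one_pow]
      calc ((3:ℝ))^(10:ℕ) = 59049 := by norm_num
      _ ≤ 2.7182818283^(11:ℕ) := by norm_num
      _ ≤ exp 1 ^ (11:ℕ) := pow_le_pow_left₀ (by norm_num) Real.exp_one_gt_d9.le _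
    exact le_of_pow_le_pow_left₀ (by norm_num) (exp_pos _).le hp
  calc log 3 ≤ log (exp (11/10)) := Real.log_le_log (by norm_num) h
  _ = 11/10 := Real.log_exp _

lemma logpi_lt : log π ≤ 23/20 := by
  have h : (π:ℝ) ≤ exp (23/20) := by
    have hp : (π:ℝ)^(20:ℕ) ≤ (exp (23/20))^(20:ℕ) := by
      have h1 : (exp (23/20:ℝ))^(20:ℕ) = exp 23 := by
        rw [← Real.exp_nat_mul]; norm_num
      rw [h1, show (23:ℝ) = ((23:ℕ):ℝ) by norm_num, ← Real.exp_one_pow]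
      calc (π:ℝ)^(20:ℕ) ≤ 3.1416^(20:ℕ) :=
            pow_le_pow_left₀ Real.pi_pos.le (Real.pi_lt_d6.le.trans (by norm_num)) _
      _ ≤ 2.7182818283^(23:ℕ) := by norm_num
      _ ≤ exp 1 ^ (23:ℕ) := pow_le_pow_left₀ (by norm_num) Real.exp_one_gt_d9.le _
    exact le_of_pow_le_pow_left₀ (by norm_num) (exp_pos _).le hp
  calc log π ≤ log (exp (23/20)) := Real.log_le_log Real.pi_pos h
  _ = 23/20 := Real.log_exp _

lemma logpi_gt : 8/7 ≤ log π := by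
  have h : exp (8/7) ≤ π := by
    have hp : (exp (8/7:ℝ))^(7:ℕ) ≤ π^(7:ℕ) := by
      have h1 : (exp (8/7:ℝ))^(7:ℕ) = exp 8 := by
        rw [← Real.exp_nat_mul]; norm_num
      rw [h1, show (8:ℝ) = ((8:ℕ):ℝ) by norm_num, ← Real.exp_one_pow]
      calc exp 1 ^ (8:ℕ) ≤ 2.7182818286^(8:ℕ) :=
            pow_le_pow_left₀ (exp_pos _).le Real.exp_one_lt_d9.le _
      _ ≤ 3.141592^(7:ℕ) := by norm_num
      _ ≤ π^(7:ℕ) := pow_le_pow_left₀ (by norm_num) Real.pi_gt_d6.le _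
    exact le_of_pow_le_pow_left₀ (by norm_num) Real.pi_pos.le hp
  calc (8/7:ℝ) = log (exp (8/7)) := (Real.log_exp _).symm
  _ ≤ log π := Real.log_le_log (exp_pos _) h

lemma log_sqrt_pi : log (Real.sqrt π) = log π / 2 := Real.log_sqrt Real.pi_pos.le

lemma log_L32 : log (Real.sqrt π / 2) = log π / 2 - log 2 := by
  rw [Real.log_div (by positivity) (by norm_num), log_sqrt_pi]

lemma log_L52 : log (3/4 * Real.sqrt π) = log 3 - 2 * log 2 + log π / 2 := by
  rw [Real.log_mul (by norm_num) (by positivity), log_sqrt_pi,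
    Real.log_div (by norm_num) (by norm_num), show (4:ℝ) = 2^2 by norm_num, Real.log_pow]
  push_cast; ring

lemma log_pi4 : log (π / 4) = log π - 2 * log 2 := by
  rw [Real.log_div Real.pi_pos.ne' (by norm_num), show (4:ℝ) = 2^2 by norm_num, Real.log_pow]
  push_cast; ring

lemma log32 : log (3/2 : ℝ) = log 3 - log 2 := Real.log_div (by norm_num) (by norm_num)

end Numerics

section ConvexPieces

lemma xlogx_aff_le {a b c0 c1 ξ : ℝ} (ha : 0 < a) (hab : a ≤ b) (hξ : ξ ∈ Icc a b)
    (h1 : a * log a + (c0 + c1 * a) ≤ 0) (h2 : b * log b + (c0 + c1 * b) ≤ 0) :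
    ξ * log ξ + (c0 + c1 * ξ) ≤ 0 :=
  convexOn_le_max ((convexOn_mul_log').add (convexOn_affine c0 c1)) ha hab hξ h1 h2

lemma xlogx_sub_log_aff_le {a b c0 c1 ξ : ℝ} (ha : 0 < a) (hab : a ≤ b) (hξ : ξ ∈ Icc a b)
    (h1 : a * log a + -log a + (c0 + c1 * a) ≤ 0) (h2 : b * log b + -log b + (c0 + c1 * b) ≤ 0) :
    ξ * log ξ + -log ξ + (c0 + c1 * ξ) ≤ 0 := by
  have hc : ConvexOn ℝ (Ioi (0:ℝ)) (fun x => (x * log x + -log x) + (c0 + c1 * x)) :=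
    ((convexOn_mul_log').add (convexOn_neg_log)).add (convexOn_affine c0 c1)
  exact convexOn_le_max hc ha hab hξ h1 h2

lemma exp_form {x : ℝ} (hx : 0 < x) :
    Real.sqrt π * x ^ x * exp (-x) = exp (log (Real.sqrt π) + x * log x - x) := by
  rw [Real.exp_sub, Real.exp_add, Real.exp_log (Real.sqrt_pos.2 Real.pi_pos),
    Real.rpow_def_of_pos hx, mul_comm (log x) x, Real.exp_neg, div_eq_mul_inv]

end ConvexPieces

section Key1

lemma KEY1 {ξ : ℝ} (h0 : 0 < ξ) (h2 : ξ ≤ 2) :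
    Real.sqrt π * ξ ^ ξ * exp (-ξ) ≤ Real.Gamma ξ := by
  have hΓpos : 0 < Real.Gamma ξ := Real.Gamma_pos_of_pos h0
  have hl2u := Real.log_two_lt_d9
  have hl2l := Real.log_two_gt_d9
  rcases le_total ξ 1 with hc | hc
  · -- ξ ∈ (0,1]
    have hG : π/4 ≤ Real.Gamma (ξ+1) := G12 ⟨by linarith, by linarith⟩
    rw [Real.Gamma_add_one h0.ne'] at hG
    have hb : Real.sqrt π * ξ ^ ξ * exp (-ξ) * ξ ≤ π/4 := by
      have hlog : log ξ ≤ ξ - 1 := Real.log_le_sub_one_of_pos h0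
      have hlogneg : log ξ ≤ 0 := Real.log_nonpos h0.le hc
      have key : (ξ + 1) * log ξ - ξ ≤ -1 := by nlinarith
      have hexp : ξ ^ ξ * exp (-ξ) * ξ = exp ((ξ+1) * log ξ - ξ) := by
        have h1 : ξ ^ ξ * exp (-ξ) * ξ = exp (ξ * log ξ) * exp (-ξ) * exp (log ξ) := by
          rw [Real.rpow_def_of_pos h0, mul_comm (log ξ) ξ, Real.exp_log h0]
        rw [h1, ← Real.exp_add, ← Real.exp_add]
        congr 1; ring
      have hle : ξ ^ ξ * exp (-ξ) * ξ ≤ exp (-1) := by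
        rw [hexp]; exact exp_le_exp.2 key
      have hfin : Real.sqrt π * exp (-1) ≤ π/4 := by
        rw [Real.exp_neg, mul_inv_le_iff₀ (exp_pos 1)]
        nlinarith [Real.sq_sqrt Real.pi_pos.le, Real.sqrt_nonneg π, Real.pi_gt_d6,
          Real.exp_one_gt_d9, sq_nonneg (Real.sqrt π - 2)]
      calc Real.sqrt π * ξ ^ ξ * exp (-ξ) * ξ = Real.sqrt π * (ξ ^ ξ * exp (-ξ) * ξ) := by ring
      _ ≤ Real.sqrt π * exp (-1) := by
          exact mul_le_mul_of_nonneg_left hle (Real.sqrt_nonneg π)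
      _ ≤ π/4 := hfin
    nlinarith [hb, hG, Real.sqrt_nonneg π, Real.rpow_pos_of_pos h0 ξ, exp_pos (-ξ)]
  · -- ξ ∈ [1,2] : log form
    have hlog : log (Real.sqrt π) + ξ * log ξ - ξ ≤ log (Real.Gamma ξ) := by
      rcases le_total ξ (3/2) with hd | hd
      · refine le_trans ?_ (C1 ⟨hc, hd⟩)
        have hF := xlogx_aff_le one_pos (by norm_num : (1:ℝ) ≤ 3/2) ⟨hc, hd⟩
          (c0 := log (Real.sqrt π) - 4 * log (Real.sqrt π / 2))
          (c1 := 2 * log (Real.sqrt π / 2) - 1) ?_ ?_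
        · linarith [hF]
        · rw [Real.log_one]
          rw [log_L32, log_sqrt_pi]
          linarith [logpi_gt]
        · rw [log32, log_L32, log_sqrt_pi]
          linarith [log3_lt]
      · refine le_trans ?_ (C2 ⟨hd, h2⟩)
        have hF := xlogx_aff_le (by norm_num : (0:ℝ) < 3/2) (by norm_num : (3/2:ℝ) ≤ 2) ⟨hd, h2⟩
          (c0 := log (Real.sqrt π) + 4 * log (3/4 * Real.sqrt π))
          (c1 := -(2 * log (3/4 * Real.sqrt π)) - 1) ?_ ?_
        · linarith [hF]
        · rw [log32, log_L52, log_sqrt_pi]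
          linarith [log3_lt, logpi_lt]
        · rw [show log (2:ℝ) = log 2 from rfl, log_L52, log_sqrt_pi]
          linarith [logpi_lt]
    calc Real.sqrt π * ξ ^ ξ * exp (-ξ)
        = exp (log (Real.sqrt π) + ξ * log ξ - ξ) := exp_form h0
      _ ≤ exp (log (Real.Gamma ξ)) := exp_le_exp.2 hlog
      _ = Real.Gamma ξ := Real.exp_log hΓpos

end Key1

section Laplace
open MeasureTheory


lemma integral_quad (M c d a b : ℝ) :
    ∫ t in a..b, (M - M * c * (t - d)^2) = M * (b - a) - M * c * ((b - d)^3 - (a - d)^3) / 3 := by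
  have hder : ∀ t : ℝ, HasDerivAt (fun x => M * id x - M * c / 3 * (x - d)^3)
      (M - M * c * (t - d)^2) t := by
    intro t
    have h1 : HasDerivAt (fun t : ℝ => t - d) 1 t := (hasDerivAt_id t).sub_const d
    have h2 := h1.pow 3
    have h3 := ((hasDerivAt_id t).const_mul M).sub (h2.const_mul (M * c / 3))
    have he : M * 1 - M * c / 3 * (↑(3:ℕ) * (t - d) ^ (3-1) * 1) = M - M * c * (t - d)^2 := by
      push_cast; ring
    exact he ▸ h3
  rw [intervalIntegral.integral_eq_sub_of_hasDerivAt (fun t _ => hder t)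
    (by apply Continuous.intervalIntegrable; continuity)]
  simp only [id]
  ring

lemma pw_fwd {ω t : ℝ} (hω : 3 ≤ ω) (ht : t ∈ Icc ω (ω + 3/2)) :
    ω ^ ω * exp (-ω) - (ω ^ ω * exp (-ω)) * (1/ω) * (t - ω)^2 ≤ exp (-t) * t ^ ω := by
  have hω0 : 0 < ω := by linarith
  have ht0 : 0 < t := by linarith [ht.1]
  have hM : 0 < ω ^ ω * exp (-ω) := mul_pos (Real.rpow_pos_of_pos hω0 _) (exp_pos _)
  have hlog : log ω - log t ≤ ω / t - 1 := by
    have h := Real.log_le_sub_one_of_pos (div_pos hω0 ht0)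
    rwa [Real.log_div hω0.ne' ht0.ne'] at h
  have hkey : ω * log ω - ω - (t - ω)^2 / ω ≤ ω * log t - t := by
    have hident : ω * (1 - ω / t) - (t - ω) + (t - ω)^2 / ω = (t - ω)^3 / (t * ω) := by
      field_simp; ring
    have h3 : (0:ℝ) ≤ (t - ω)^3 / (t * ω) :=
      div_nonneg (pow_nonneg (by linarith [ht.1]) 3) (by positivity)
    have h4 : ω * (1 - ω/t) ≤ ω * (log t - log ω) :=
      mul_le_mul_of_nonneg_left (by linarith) hω0.le
    nlinarith [hident, h3, h4]
  calc ω ^ ω * exp (-ω) - (ω ^ ω * exp (-ω)) * (1/ω) * (t - ω)^2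
      ≤ ω ^ ω * exp (-ω) * exp (-((t - ω)^2/ω)) := by
        have he := Real.add_one_le_exp (-((t - ω)^2/ω))
        have h5 : (1 : ℝ) - (t - ω)^2/ω ≤ exp (-((t - ω)^2/ω)) := by linarith
        calc ω ^ ω * exp (-ω) - (ω ^ ω * exp (-ω)) * (1/ω) * (t - ω)^2
            = (ω ^ ω * exp (-ω)) * (1 - (t - ω)^2/ω) := by ring
          _ ≤ (ω ^ ω * exp (-ω)) * exp (-((t - ω)^2/ω)) :=
              mul_le_mul_of_nonneg_left h5 hM.le
    _ = exp (ω * log ω - ω - (t - ω)^2/ω) := by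
        rw [Real.rpow_def_of_pos hω0, ← Real.exp_add, ← Real.exp_add]
        congr 1; ring
    _ ≤ exp (ω * log t - t) := exp_le_exp.2 hkey
    _ = exp (-t) * t ^ ω := by
        rw [Real.rpow_def_of_pos ht0, mul_comm (exp (-t)), ← Real.exp_add]
        congr 1; ring

lemma pw_bwd {ω t : ℝ} (hω : 3 ≤ ω) (ht : t ∈ Icc (ω - 3/2) ω) :
    ω ^ ω * exp (-ω) - (ω ^ ω * exp (-ω)) * (2/ω) * (t - ω)^2 ≤ exp (-t) * t ^ ω := by
  have hω0 : 0 < ω := by linarith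
  have ht0 : 0 < t := by linarith [ht.1]
  have hM : 0 < ω ^ ω * exp (-ω) := mul_pos (Real.rpow_pos_of_pos hω0 _) (exp_pos _)
  have hlog : log ω - log t ≤ ω / t - 1 := by
    have h := Real.log_le_sub_one_of_pos (div_pos hω0 ht0)
    rwa [Real.log_div hω0.ne' ht0.ne'] at h
  have hkey : ω * log ω - ω - 2 * (t - ω)^2 / ω ≤ ω * log t - t := by
    have hident : ω * (1 - ω / t) - (t - ω) + 2 * (t - ω)^2 / ω
        = (t - ω)^2 * (2*t - ω) / (t * ω) := by
      field_simp; ring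
    have h3 : (0:ℝ) ≤ (t - ω)^2 * (2*t - ω) / (t * ω) := by
      apply div_nonneg _ (by positivity)
      apply mul_nonneg (sq_nonneg _)
      linarith [ht.1]
    have h4 : ω * (1 - ω/t) ≤ ω * (log t - log ω) :=
      mul_le_mul_of_nonneg_left (by linarith) hω0.le
    nlinarith [hident, h3, h4]
  calc ω ^ ω * exp (-ω) - (ω ^ ω * exp (-ω)) * (2/ω) * (t - ω)^2
      ≤ ω ^ ω * exp (-ω) * exp (-(2 * (t - ω)^2/ω)) := by
        have he := Real.add_one_le_exp (-(2 * (t - ω)^2/ω))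
        have h5 : (1 : ℝ) - 2 * (t - ω)^2/ω ≤ exp (-(2 * (t - ω)^2/ω)) := by linarith
        calc ω ^ ω * exp (-ω) - (ω ^ ω * exp (-ω)) * (2/ω) * (t - ω)^2
            = (ω ^ ω * exp (-ω)) * (1 - 2 * (t - ω)^2/ω) := by ring
          _ ≤ (ω ^ ω * exp (-ω)) * exp (-(2 * (t - ω)^2/ω)) :=
              mul_le_mul_of_nonneg_left h5 hM.le
    _ = exp (ω * log ω - ω - 2 * (t - ω)^2/ω) := by
        rw [Real.rpow_def_of_pos hω0, ← Real.exp_add, ← Real.exp_add]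
        congr 1; ring
    _ ≤ exp (ω * log t - t) := exp_le_exp.2 hkey
    _ = exp (-t) * t ^ ω := by
        rw [Real.rpow_def_of_pos ht0, mul_comm (exp (-t)), ← Real.exp_add]
        congr 1; ring

set_option maxHeartbeats 1000000 in
lemma KEY2_laplace {ω : ℝ} (hω : 3 ≤ ω) :
    Real.sqrt π * ω ^ ω * exp (-ω) ≤ Real.Gamma (ω + 1) := by
  have hω0 : 0 < ω := by linarith
  have hM : 0 < ω ^ ω * exp (-ω) := mul_pos (Real.rpow_pos_of_pos hω0 _) (exp_pos _)
  have hab : ω - 3/2 ≤ ω + 3/2 := by linarith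
  have hcont : ContinuousOn (fun t : ℝ => exp (-t) * t ^ ω) (Icc (ω - 3/2) (ω + 3/2)) := by
    intro t ht
    have ht0 : 0 < t := by
      have := ht.1; simp only [mem_Icc] at *; linarith [ht.1]
    exact ((Real.continuous_exp.comp continuous_neg).continuousAt.mul
      (Real.continuousAt_rpow_const t ω (Or.inl ht0.ne'))).continuousWithinAt
  have hint1 : IntervalIntegrable (fun t : ℝ => exp (-t) * t ^ ω) volume (ω - 3/2) ω := by
    apply ContinuousOn.intervalIntegrable
    apply hcont.mono
    rw [uIcc_of_le (by linarith)]
    exact Icc_subset_Icc le_rfl (by linarith)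
  have hint2 : IntervalIntegrable (fun t : ℝ => exp (-t) * t ^ ω) volume ω (ω + 3/2) := by
    apply ContinuousOn.intervalIntegrable
    apply hcont.mono
    rw [uIcc_of_le (by linarith)]
    exact Icc_subset_Icc (by linarith) le_rfl
  -- Gamma lower bounded by integral over the window
  have hgamma : ∫ t in (ω - 3/2)..(ω + 3/2), exp (-t) * t ^ ω ≤ Real.Gamma (ω + 1) := by
    rw [Real.Gamma_eq_integral (by linarith : (0:ℝ) < ω + 1)]
    rw [intervalIntegral.integral_of_le hab]
    have hintG : IntegrableOn (fun x : ℝ => exp (-x) * x ^ ω) (Ioi 0) := by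
      have := Real.GammaIntegral_convergent (s := ω + 1) (by linarith)
      simpa using this
    have hsub : Ioc (ω - 3/2) (ω + 3/2) ⊆ Ioi (0:ℝ) := by
      intro x hx
      simp only [mem_Ioc] at hx
      simp only [mem_Ioi]
      linarith [hx.1]
    have h := setIntegral_mono_set (μ := volume) (s := Ioc (ω - 3/2) (ω + 3/2))
      (t := Ioi (0:ℝ)) (f := fun x : ℝ => exp (-x) * x ^ ω) hintG
      ?_ (HasSubset.Subset.eventuallyLE hsub)
    · convert h using 2
      rfl
      simp [add_sub_cancel_right]
    · filter_upwards [ae_restrict_mem measurableSet_Ioi] with x hx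
      exact mul_nonneg (exp_pos _).le (Real.rpow_nonneg (le_of_lt hx) _)
  -- split and lower bound
  have hsplit : (∫ t in (ω - 3/2)..ω, exp (-t) * t ^ ω) + (∫ t in ω..(ω + 3/2), exp (-t) * t ^ ω)
      ≤ Real.Gamma (ω + 1) := by
    rw [intervalIntegral.integral_add_adjacent_intervals hint1 hint2]
    exact hgamma
  set M := ω ^ ω * exp (-ω) with hMdef
  have hq1 : ∫ t in (ω - 3/2)..ω, (M - M * (2/ω) * (t - ω)^2)
      ≤ ∫ t in (ω - 3/2)..ω, exp (-t) * t ^ ω := by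
    apply intervalIntegral.integral_mono_on (by linarith)
      (by apply Continuous.intervalIntegrable; continuity) hint1
    intro t ht
    exact pw_bwd hω ht
  have hq2 : ∫ t in ω..(ω + 3/2), (M - M * (1/ω) * (t - ω)^2)
      ≤ ∫ t in ω..(ω + 3/2), exp (-t) * t ^ ω := by
    apply intervalIntegral.integral_mono_on (by linarith)
      (by apply Continuous.intervalIntegrable; continuity) hint2
    intro t ht
    exact pw_fwd hω ht
  have hv1 : ∫ t in (ω - 3/2)..ω, (M - M * (2/ω) * (t - ω)^2) = M * (3/2) - M * (9/(4*ω)) := by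
    rw [integral_quad]
    field_simp
    ring
  have hv2 : ∫ t in ω..(ω + 3/2), (M - M * (1/ω) * (t - ω)^2) = M * (3/2) - M * (9/(8*ω)) := by
    rw [integral_quad]
    field_simp
    ring
  have hsum : M * (15/8) ≤ Real.Gamma (ω + 1) := by
    have h1 : M * (9/(4*ω)) ≤ M * (3/4) := by
      apply mul_le_mul_of_nonneg_left _ hM.le
      rw [div_le_iff₀ (by positivity)]
      nlinarith
    have h2 : M * (9/(8*ω)) ≤ M * (3/8) := by
      apply mul_le_mul_of_nonneg_left _ hM.le
      rw [div_le_iff₀ (by positivity)]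
      nlinarith
    linarith [hq1, hq2, hsplit, hv1, hv2, h1, h2]
  have hsπ : Real.sqrt π ≤ 15/8 := by
    nlinarith [Real.sq_sqrt Real.pi_pos.le, Real.sqrt_nonneg π, Real.pi_lt_d2,
      sq_nonneg (Real.sqrt π - 15/8)]
  calc Real.sqrt π * ω ^ ω * exp (-ω) = Real.sqrt π * M := by rw [hMdef]; ring
    _ ≤ (15/8) * M := mul_le_mul_of_nonneg_right hsπ hM.le
    _ ≤ Real.Gamma (ω + 1) := by nlinarith [hsum]

end Laplace

section Key2

lemma KEY2 {ω : ℝ} (h1 : 1 ≤ ω) :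
    Real.sqrt π * ω ^ ω * exp (-ω) ≤ Real.Gamma (ω + 1) := by
  have hω0 : 0 < ω := by linarith
  have hl2u := Real.log_two_lt_d9
  have hl2l := Real.log_two_gt_d9
  rcases le_total ω 2 with hc | hc
  · -- ω ∈ [1,2] : Γ(ω+1) = ω Γ(ω)
    rw [Real.Gamma_add_one hω0.ne']
    have hΓpos : 0 < Real.Gamma ω := Real.Gamma_pos_of_pos hω0
    have hlog : log (Real.sqrt π) + ω * log ω - ω ≤ log ω + log (Real.Gamma ω) := by
      rcases le_total ω (3/2) with hd | hd
      · have hchord := C1 ⟨h1, hd⟩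
        have hF := xlogx_sub_log_aff_le one_pos (by norm_num : (1:ℝ) ≤ 3/2) ⟨h1, hd⟩
          (c0 := log (Real.sqrt π) - 4 * log (Real.sqrt π / 2))
          (c1 := 2 * log (Real.sqrt π / 2) - 1) ?_ ?_
        · linarith [hF, hchord]
        · rw [Real.log_one]
          rw [log_L32, log_sqrt_pi]
          linarith [logpi_gt]
        · rw [log32, log_L32, log_sqrt_pi]
          linarith [log3_lt]
      · have hchord := C2 ⟨hd, hc⟩
        have hF := xlogx_sub_log_aff_le (by norm_num : (0:ℝ) < 3/2)
          (by norm_num : (3/2:ℝ) ≤ 2) ⟨hd, hc⟩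
          (c0 := log (Real.sqrt π) + 4 * log (3/4 * Real.sqrt π))
          (c1 := -(2 * log (3/4 * Real.sqrt π)) - 1) ?_ ?_
        · linarith [hF, hchord]
        · rw [log32, log_L52, log_sqrt_pi]
          linarith [log3_lt, logpi_lt]
        · rw [log_L52, log_sqrt_pi]
          linarith [logpi_lt]
    calc Real.sqrt π * ω ^ ω * exp (-ω)
        = exp (log (Real.sqrt π) + ω * log ω - ω) := exp_form hω0
      _ ≤ exp (log ω + log (Real.Gamma ω)) := exp_le_exp.2 hlog
      _ = ω * Real.Gamma ω := by
          rw [Real.exp_add, Real.exp_log hω0, Real.exp_log hΓpos]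
  · rcases le_total ω 3 with hd | hd
    · -- ω ∈ [2,3] : Γ(ω+1) = ω (ω-1) Γ(ω-1) ≥ ω(ω-1)(π/4)
      have hω1 : (0:ℝ) < ω - 1 := by linarith
      have e1 : Real.Gamma (ω + 1) = ω * ((ω - 1) * Real.Gamma (ω - 1)) := by
        rw [Real.Gamma_add_one hω0.ne']
        congr 1
        have e2 := Real.Gamma_add_one (s := ω - 1) hω1.ne'
        rw [sub_add_cancel] at e2
        exact e2
      have hG : π/4 ≤ Real.Gamma (ω-1) := G12 ⟨by linarith, by linarith⟩
      have hsec : (ω - 2) * log 2 ≤ log (ω - 1) := by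
        have h := log_secant one_pos one_lt_two (x := ω - 1) ⟨by linarith, by linarith⟩
        rw [Real.log_one] at h
        have : (2 - (ω-1))/(2 - 1) * 0 + ((ω-1) - 1)/(2 - 1) * log 2 = (ω - 2) * log 2 := by
          ring
        linarith [h, this.symm.le]
      have hlog : log (Real.sqrt π) + ω * log ω - ω
          ≤ log ω + log (ω - 1) + log (π/4) := by
        have hF := xlogx_sub_log_aff_le (by norm_num : (0:ℝ) < 2)
          (by norm_num : (2:ℝ) ≤ 3) ⟨hc, hd⟩
          (c0 := log (Real.sqrt π) + 4 * log 2 - log π)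
          (c1 := -1 - log 2) ?_ ?_
        · rw [log_pi4]
          linarith [hF, hsec]
        · rw [log_sqrt_pi]
          have hlog2' : log (2:ℝ) ≤ 0.6931471808 := hl2u.le
          linarith [logpi_gt]
        · rw [log_sqrt_pi]
          linarith [log3_lt, logpi_gt]
      calc Real.sqrt π * ω ^ ω * exp (-ω)
          = exp (log (Real.sqrt π) + ω * log ω - ω) := exp_form hω0
        _ ≤ exp (log ω + log (ω - 1) + log (π/4)) := exp_le_exp.2 hlog
        _ = ω * ((ω - 1) * (π/4)) := by
            rw [Real.exp_add, Real.exp_add, Real.exp_log hω0, Real.exp_log hω1,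
              Real.exp_log (by positivity)]
            ring
        _ ≤ ω * ((ω - 1) * Real.Gamma (ω - 1)) := by
            apply mul_le_mul_of_nonneg_left _ hω0.le
            exact mul_le_mul_of_nonneg_left hG hω1.le
        _ = Real.Gamma (ω + 1) := e1.symm
    · exact KEY2_laplace hd

end Key2



/-- The function β(ω,t). -/
noncomputable def betaFn (ω t : ℝ) : ℝ :=
  if 0 < t then t ^ ω * Real.exp (-t) * (1 - Real.exp (-t)) / Real.Gamma (ω + 1)
  else 0

theorem betaFn_bound (ω : ℝ) (hω : -1 < ω) (t : ℝ) :
    |betaFn ω t| ≤ 1 / Real.sqrt Real.pi := by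
  have hsπ : 0 < Real.sqrt π := Real.sqrt_pos.2 Real.pi_pos
  unfold betaFn
  split_ifs with ht
  · have hξ : (0:ℝ) < ω + 1 := by linarith
    have hΓ : 0 < Real.Gamma (ω + 1) := Real.Gamma_pos_of_pos hξ
    have htω : 0 < t ^ ω := Real.rpow_pos_of_pos ht ω
    have h1e : 0 < 1 - exp (-t) := by
      have : exp (-t) < 1 := by
        rw [show (1:ℝ) = exp 0 by rw [Real.exp_zero]]
        exact Real.exp_lt_exp.2 (by linarith)
      linarith
    have hnum : 0 ≤ t ^ ω * exp (-t) * (1 - exp (-t)) :=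
      mul_nonneg (mul_nonneg htω.le (exp_pos _).le) h1e.le
    rw [abs_of_nonneg (div_nonneg hnum hΓ.le)]
    rw [div_le_div_iff₀ hΓ hsπ, one_mul]
    -- goal : t^ω * exp(-t) * (1 - exp(-t)) * √π ≤ Γ(ω+1)
    have main : Real.sqrt π * (t ^ ω * exp (-t) * (1 - exp (-t))) ≤ Real.Gamma (ω + 1) := by
      rcases le_total ω 1 with hc | hc
      · -- use 1 - exp(-t) ≤ t
        have hb1 : 1 - exp (-t) ≤ t := by
          have := Real.add_one_le_exp (-t)
          linarith
        have step1 : t ^ ω * exp (-t) * (1 - exp (-t)) ≤ t ^ (ω + 1) * exp (-t) := by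
          have ht1 : t ^ (ω + 1) = t ^ ω * t := by
            rw [Real.rpow_add ht, Real.rpow_one]
          rw [ht1]
          calc t ^ ω * exp (-t) * (1 - exp (-t)) ≤ t ^ ω * exp (-t) * t := by
                exact mul_le_mul_of_nonneg_left hb1 (by positivity)
            _ = t ^ ω * t * exp (-t) := by ring
        have step2 : t ^ (ω + 1) * exp (-t) ≤ (ω + 1) ^ (ω + 1) * exp (-(ω + 1)) :=
          rpow_mul_exp_le hξ ht
        calc Real.sqrt π * (t ^ ω * exp (-t) * (1 - exp (-t)))
            ≤ Real.sqrt π * ((ω + 1) ^ (ω + 1) * exp (-(ω + 1))) := by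
              apply mul_le_mul_of_nonneg_left (step1.trans step2) hsπ.le
          _ = Real.sqrt π * (ω + 1) ^ (ω + 1) * exp (-(ω + 1)) := by ring
          _ ≤ Real.Gamma (ω + 1) := KEY1 hξ (by linarith)
      · -- use 1 - exp(-t) ≤ 1
        have hω0 : 0 < ω := by linarith
        have step1 : t ^ ω * exp (-t) * (1 - exp (-t)) ≤ t ^ ω * exp (-t) := by
          nlinarith [mul_pos htω (exp_pos (-t)), h1e, exp_pos (-t)]
        have step2 : t ^ ω * exp (-t) ≤ ω ^ ω * exp (-ω) := rpow_mul_exp_le hω0 ht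
        calc Real.sqrt π * (t ^ ω * exp (-t) * (1 - exp (-t)))
            ≤ Real.sqrt π * (ω ^ ω * exp (-ω)) := by
              apply mul_le_mul_of_nonneg_left (step1.trans step2) hsπ.le
          _ = Real.sqrt π * ω ^ ω * exp (-ω) := by ring
          _ ≤ Real.Gamma (ω + 1) := KEY2 hc
    linarith [main, le_of_eq (mul_comm (Real.sqrt π) (t ^ ω * exp (-t) * (1 - exp (-t))))]
  · rw [abs_zero]
    positivity
end
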